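/- arXiv:2402.00226 — 6 statements merged into one kernel-verified Lean document; each statement's English description precedes it below -/
import Mathlib

section
/- Assume γ < ω₁, {f_τ : τ ∈ I} is a suitable specializing family with top level γ, Q ⊆ ℚ⁺ is finite, A ⊆ I is finite, and X ⊆ T_{γ+1} is finite with unique drop-downs to γ. Then there exists a suitable specializing family {g_τ : τ ∈ I} with top level γ+1 such that: (1) f_τ ⊆ g_τ for all τ ∈ I; and (2) for all τ ∈ A, X↾γ and X are (g_τ,Q)-consistent. -/
noncomputable section

/-- The ordinal `ω₁`. -/
def omega1 : Ordinal := (Cardinal.aleph 1).ord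

/-- A normal, infinitely splitting `ω₁`-tree structure on the partial order `α`.
`height x` is the height of `x` (the order type of its set of strict predecessors,
which is linearly ordered by `pred_linear`), and `restrict x β` is the unique node
of height `β` below `x` (for `β ≤ height x`). -/
structure OmegaOneTree (α : Type) [PartialOrder α] where
  height : α → Ordinal
  restrict : α → Ordinal → α
  height_lt_omega1 : ∀ x : α, height x < omega1
  height_strictMono : ∀ {x y : α}, x < y → height x < height y
  pred_linear : ∀ {x y z : α}, y < x → z < x → y ≤ z ∨ z ≤ y
  restrict_le : ∀ (x : α) {β : Ordinal}, β ≤ height x → restrict x β ≤ x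
  height_restrict : ∀ (x : α) {β : Ordinal}, β ≤ height x → height (restrict x β) = β
  restrict_eq : ∀ {x y : α} {β : Ordinal}, y ≤ x → height y = β → restrict x β = y
  level_nonempty : ∀ β : Ordinal, β < omega1 → ∃ x : α, height x = β
  level_countable : ∀ β : Ordinal, {x : α | height x = β}.Countable
  root_exists : ∃ r : α, height r = 0 ∧ ∀ x : α, r ≤ x
  splitting : ∀ x : α, {y : α | x < y ∧ height y = height x + 1}.Infinite
  exists_above : ∀ (x : α) {β : Ordinal}, height x < β → β < omega1 →
    ∃ y : α, x < y ∧ height y = β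
  limit_eq : ∀ {x y : α}, height x = height y → Order.IsSuccLimit (height x) →
    (∀ z : α, z < x ↔ z < y) → x = y

variable {α : Type} [PartialOrder α]

/-- `a` is a tuple all of whose components have height `β`
(i.e. an element of the product tree of height `β`). -/
def IsTupleOfHeight (T : OmegaOneTree α) {m : ℕ} (a : Fin m → α) (β : Ordinal) : Prop :=
  ∀ i, T.height (a i) = β

/-- `a` is a minimal injective tuple of height `β`: it is injective of height `β`
and none of its proper restrictions is injective. -/
def MinimalTuple (T : OmegaOneTree α) {m : ℕ} (a : Fin m → α) (β : Ordinal) : Prop :=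
  IsTupleOfHeight T a β ∧ Function.Injective a ∧
    ∀ γ : Ordinal, γ < β → ¬ Function.Injective (fun i => T.restrict (a i) γ)

/-- `f` is a specializing function on `U^τ↾(β+1)`, where the minimal tuple of index `τ`
is `aτ`.  Here `f` is a total function whose values only matter on tuples of height
`≤ β` lying in `U^τ` (i.e. componentwise above `aτ`, or componentwise strictly
below `aτ`). -/
def IsSpecFun (T : OmegaOneTree α) {n : ℕ} (aτ : Fin (n + 1) → α) (β : Ordinal)
    (f : (Fin (n + 1) → α) → ℚ) : Prop :=
  (∀ (c : Fin (n + 1) → α) (ζ : Ordinal), ζ ≤ β → IsTupleOfHeight T c ζ →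
      (∀ i, c i < aτ i) → f c = -1) ∧
  (∀ (c : Fin (n + 1) → α) (ζ : Ordinal), ζ ≤ β → IsTupleOfHeight T c ζ →
      (∀ i, aτ i ≤ c i) → 0 < f c) ∧
  (∀ (b c : Fin (n + 1) → α) (ζ ξ : Ordinal), ζ ≤ β → ξ ≤ β →
      IsTupleOfHeight T b ζ → IsTupleOfHeight T c ξ →
      (∀ i, aτ i ≤ b i) → (∀ i, aτ i ≤ c i) → (∀ i, b i < c i) → f b < f c)

/-- `g` extends `f` on `U^τ↾(γ+1)` (i.e. `f ⊆ g` for specializing functions with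
top levels `γ ≤` top level of `g`). -/
def SpecExtends (T : OmegaOneTree α) {n : ℕ} (aτ : Fin (n + 1) → α) (γ : Ordinal)
    (f g : (Fin (n + 1) → α) → ℚ) : Prop :=
  ∀ (c : Fin (n + 1) → α) (ζ : Ordinal), ζ ≤ γ → IsTupleOfHeight T c ζ →
    ((∀ i, aτ i ≤ c i) ∨ (∀ i, c i < aτ i)) → g c = f c

/-- `X↾lo` and `X` are `(f,Q)`-consistent: for every `q ∈ Q` and every tuple `c` of
elements of `X` lying in the derived tree of `aτ`, if `f(c↾lo) < q` then `f(c) < q`. -/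
def SpecConsistent (T : OmegaOneTree α) {n : ℕ} (aτ : Fin (n + 1) → α)
    (f : (Fin (n + 1) → α) → ℚ) (lo : Ordinal) (Q : Set ℚ) (X : Set α) : Prop :=
  ∀ q ∈ Q, ∀ c : Fin (n + 1) → α, (∀ i, c i ∈ X) → (∀ i, aτ i ≤ c i) →
    f (fun i => T.restrict (c i) lo) < q → f c < q

/-- The specializing family `{f τ : τ ∈ I}` with top level `γ` is suitable
(relative to the enumeration `amin` of minimal tuples). -/
def SuitableFamily (T : OmegaOneTree α) {n : ℕ} (amin : Ordinal → Fin (n + 1) → α)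
    (I : Set Ordinal) (γ : Ordinal) (f : Ordinal → (Fin (n + 1) → α) → ℚ) : Prop :=
  ∀ lo hi : Ordinal, lo < hi → hi ≤ γ →
    ∀ B : Set Ordinal, B.Finite → B ⊆ I →
      ∀ R : Set ℚ, R.Finite → (∀ q ∈ R, 0 < q) →
        ∀ t : Set α, t.Finite → (∀ x ∈ t, T.height x = hi) →
          ∀ l : ℕ, n ≤ l →
            ∀ a : Fin l → α, Function.Injective a → (∀ i, T.height (a i) = lo) →
              ∀ idx : Fin n → Fin l, Function.Injective idx →
                ∀ c : Fin n → α,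
                  (∀ k, T.height (c k) = hi ∧ c k ∉ t ∧ a (idx k) < c k) →
                  ∃ b : Fin l → α,
                    (∀ i, T.height (b i) = hi ∧ b i ∉ t ∧ a i < b i) ∧
                    (∀ k, b (idx k) = c k) ∧
                    ∀ τ ∈ B, SpecConsistent T (amin τ) (f τ) lo R (Set.range b)

namespace OmegaOneTree

lemma height_mono (T : OmegaOneTree α) {x y : α} (h : x ≤ y) : T.height x ≤ T.height y := by
  rcases h.lt_or_eq with h' | h'
  · exact (T.height_strictMono h').le
  · rw [h']

lemma lt_of_le_of_height_lt (T : OmegaOneTree α) {x y : α} (h : x ≤ y)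
    (hh : T.height x < T.height y) : x < y :=
  lt_of_le_of_ne h (by rintro rfl; exact lt_irrefl _ hh)

lemma eq_of_le_of_height_eq (T : OmegaOneTree α) {x y : α} (h : x ≤ y)
    (hh : T.height x = T.height y) : x = y := by
  rcases h.lt_or_eq with h' | h'
  · exact absurd (T.height_strictMono h') (by rw [hh]; exact lt_irrefl _)
  · exact h'

lemma restrict_self (T : OmegaOneTree α) (x : α) : T.restrict x (T.height x) = x :=
  T.restrict_eq le_rfl rfl

lemma restrict_mono (T : OmegaOneTree α) (x : α) {β δ : Ordinal}
    (h1 : β ≤ δ) (h2 : δ ≤ T.height x) : T.restrict x β ≤ T.restrict x δ := by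
  rcases eq_or_lt_of_le h1 with rfl | hlt
  · exact le_rfl
  have hβx : β ≤ T.height x := h1.trans h2
  rcases eq_or_lt_of_le h2 with rfl | hδx
  · rw [T.restrict_self]; exact T.restrict_le x hβx
  have hb : T.restrict x β < x :=
    T.lt_of_le_of_height_lt (T.restrict_le x hβx)
      (by rw [T.height_restrict x hβx]; exact lt_of_lt_of_le hlt h2)
  have hd : T.restrict x δ < x :=
    T.lt_of_le_of_height_lt (T.restrict_le x h2)
      (by rw [T.height_restrict x h2]; exact hδx)
  rcases T.pred_linear hb hd with h | h
  · exact h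
  · exfalso
    rcases h.lt_or_eq with h' | h'
    · have hh := T.height_strictMono h'
      rw [T.height_restrict x h2, T.height_restrict x hβx] at hh
      exact absurd hlt (asymm hh)
    · have hβδ : δ = β := by
        have hh := congrArg T.height h'
        rwa [T.height_restrict x h2, T.height_restrict x hβx] at hh
      exact hlt.ne hβδ.symm

lemma restrict_restrict (T : OmegaOneTree α) (x : α) {β δ : Ordinal}
    (h1 : β ≤ δ) (h2 : δ ≤ T.height x) :
    T.restrict (T.restrict x δ) β = T.restrict x β :=
  T.restrict_eq (T.restrict_mono x h1 h2) (T.height_restrict x (h1.trans h2))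

lemma exists_pick (T : OmegaOneTree α) {γ : Ordinal} (y : α) (hy : T.height y = γ)
    (s : Set α) (hs : s.Finite) (rk : α → ℕ)
    (hrk : Set.InjOn rk {x : α | T.height x = γ + 1}) (N : ℕ) :
    ∃ x : α, y < x ∧ T.height x = γ + 1 ∧ x ∉ s ∧ N ≤ rk x := by
  have hinf := T.splitting y
  rw [hy] at hinf
  have hsmall : {x : α | (y < x ∧ T.height x = γ + 1) ∧ rk x < N}.Finite := by
    apply Set.Finite.of_finite_image (f := rk)
    · exact (Set.finite_Iio N).subset (by rintro _ ⟨x, ⟨_, h2⟩, rfl⟩; exact h2)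
    · exact hrk.mono (by rintro x ⟨⟨_, h⟩, _⟩; exact h)
  obtain ⟨x, hx⟩ := (hinf.diff (hs.union hsmall)).nonempty
  obtain ⟨⟨hx1, hx2⟩, hx3⟩ := hx
  refine ⟨x, hx1, hx2, fun h => hx3 (Set.mem_union_left _ h), ?_⟩
  by_contra h
  exact hx3 (Set.mem_union_right _ ⟨⟨hx1, hx2⟩, Nat.lt_of_not_le h⟩)

end OmegaOneTree
/-- Lemma 3.9: a suitable specializing family with top level `γ` extends to a
suitable specializing family with top level `γ+1`, preserving consistency on a
prescribed finite set `X ⊆ T_{γ+1}`. -/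
theorem suitable_family_one_step_extension
    (T : OmegaOneTree α) (n : ℕ) (hn : 1 ≤ n)
    (amin : Ordinal → Fin (n + 1) → α)
    (hamin : ∀ τ : Ordinal, τ < omega1 → ∃ β, MinimalTuple T (amin τ) β)
    (γ : Ordinal) (hγ : γ < omega1)
    (I : Set Ordinal) (hI : I ⊆ Set.Iio omega1) (hIc : I.Countable)
    (f : Ordinal → (Fin (n + 1) → α) → ℚ)
    (hffam : ∀ τ ∈ I, IsSpecFun T (amin τ) γ (f τ))
    (hfsuit : SuitableFamily T amin I γ f)
    (Q : Set ℚ) (hQfin : Q.Finite) (hQpos : ∀ q ∈ Q, 0 < q)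
    (A : Set Ordinal) (hAsub : A ⊆ I) (hAfin : A.Finite)
    (X : Set α) (hXfin : X.Finite) (hXlev : ∀ x ∈ X, T.height x = γ + 1)
    (hXdrop : Set.InjOn (fun x => T.restrict x γ) X) :
    ∃ g : Ordinal → (Fin (n + 1) → α) → ℚ,
      (∀ τ ∈ I, IsSpecFun T (amin τ) (γ + 1) (g τ)) ∧
      SuitableFamily T amin I (γ + 1) g ∧
      (∀ τ ∈ I, SpecExtends T (amin τ) γ (f τ) (g τ)) ∧
      (∀ τ ∈ A, SpecConsistent T (amin τ) (g τ) γ Q X) := by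
  classical
  have hγγ1 : γ < γ + 1 := by rw [Ordinal.add_one_eq_succ]; exact Order.lt_succ γ
  have hltsucc : ∀ {x : Ordinal}, x < γ + 1 → x ≤ γ := fun {x} h => by
    rw [Ordinal.add_one_eq_succ] at h; exact Order.lt_succ_iff.mp h
  obtain ⟨rk, hrk⟩ := Set.countable_iff_exists_injOn.mp (T.level_countable (γ + 1))
  -- the increment function δ
  obtain ⟨δ, hδpos, hδrt, hδqt⟩ :
      ∃ δ : Ordinal → (Fin (n + 1) → α) → ℚ,
        (∀ τ c, 0 < δ τ c) ∧
        (∀ τ c, δ τ c ≤ (1/2 : ℚ) ^ (Finset.univ.sup fun i => rk (c i))) ∧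
        (∀ τ c q, q ∈ Q → max (f τ (fun i => T.restrict (c i) γ)) 0 < q →
          max (f τ (fun i => T.restrict (c i) γ)) 0 + δ τ c < q) := by
    refine ⟨fun τ c =>
      min ((1/2 : ℚ) ^ (Finset.univ.sup fun i => rk (c i)))
        (if h : (hQfin.toFinset.filter
            (fun q => max (f τ (fun i => T.restrict (c i) γ)) 0 < q)).Nonempty
         then ((hQfin.toFinset.filter
            (fun q => max (f τ (fun i => T.restrict (c i) γ)) 0 < q)).min' h
            - max (f τ (fun i => T.restrict (c i) γ)) 0) / 2
         else 1), ?_, ?_, ?_⟩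
    · intro τ c
      refine lt_min (by positivity) ?_
      split_ifs with h
      · have hmem := Finset.min'_mem _ h
        rw [Finset.mem_filter] at hmem
        linarith [hmem.2]
      · norm_num
    · intro τ c; exact min_le_left _ _
    · intro τ c q hq hlt
      dsimp only
      have hqm : q ∈ hQfin.toFinset.filter
          (fun q => max (f τ (fun i => T.restrict (c i) γ)) 0 < q) := by
        rw [Finset.mem_filter, Set.Finite.mem_toFinset]; exact ⟨hq, hlt⟩
      have hne : (hQfin.toFinset.filter
          (fun q => max (f τ (fun i => T.restrict (c i) γ)) 0 < q)).Nonempty := ⟨q, hqm⟩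
      rw [dif_pos hne]
      have h1 : (hQfin.toFinset.filter
          (fun q => max (f τ (fun i => T.restrict (c i) γ)) 0 < q)).min' hne ≤ q :=
        Finset.min'_le _ _ hqm
      have h2 : max (f τ (fun i => T.restrict (c i) γ)) 0 <
          (hQfin.toFinset.filter
            (fun q => max (f τ (fun i => T.restrict (c i) γ)) 0 < q)).min' hne := by
        have hm := Finset.min'_mem _ hne; rw [Finset.mem_filter] at hm; exact hm.2
      have h3 := min_le_right ((1/2 : ℚ) ^ (Finset.univ.sup fun i => rk (c i)))
        (((hQfin.toFinset.filter
            (fun q => max (f τ (fun i => T.restrict (c i) γ)) 0 < q)).min' hne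
          - max (f τ (fun i => T.restrict (c i) γ)) 0) / 2)
      linarith
  -- the extension g
  obtain ⟨g, hg_top_ab, hg_top_be, hg_not⟩ :
      ∃ g : Ordinal → (Fin (n + 1) → α) → ℚ,
        (∀ τ c, IsTupleOfHeight T c (γ + 1) → (∀ i, amin τ i ≤ c i) →
            g τ c = max (f τ (fun i => T.restrict (c i) γ)) 0 + δ τ c) ∧
        (∀ τ c, IsTupleOfHeight T c (γ + 1) → (∀ i, c i < amin τ i) → g τ c = -1) ∧
        (∀ τ c, ¬ IsTupleOfHeight T c (γ + 1) → g τ c = f τ c) := by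
    refine ⟨fun τ c =>
        if IsTupleOfHeight T c (γ + 1) ∧ (∀ i, amin τ i ≤ c i) then
          max (f τ (fun i => T.restrict (c i) γ)) 0 + δ τ c
        else if IsTupleOfHeight T c (γ + 1) ∧ (∀ i, c i < amin τ i) then -1
        else f τ c, ?_, ?_, ?_⟩
    · intro τ c h1 h2; dsimp only; rw [if_pos ⟨h1, h2⟩]
    · intro τ c h1 h2
      dsimp only
      rw [if_neg, if_pos ⟨h1, h2⟩]
      rintro ⟨-, h3⟩
      exact lt_irrefl _ ((h3 0).trans_lt (h2 0))
    · intro τ c h1; dsimp only; rw [if_neg (fun h => h1 h.1), if_neg (fun h => h1 h.1)]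
  have hg_low : ∀ τ (c : Fin (n + 1) → α) (ζ : Ordinal), ζ ≤ γ → IsTupleOfHeight T c ζ →
      g τ c = f τ c := by
    intro τ c ζ hζ htc
    refine hg_not τ c fun h => ?_
    have hζe : ζ = γ + 1 := (htc 0).symm.trans (h 0)
    exact absurd (hζe ▸ hζ) (not_le.mpr hγγ1)
  have hmin : ∀ τ ∈ I, ∃ β : Ordinal,
      IsTupleOfHeight T (amin τ) β ∧ Function.Injective (amin τ) := fun τ hτ => by
    obtain ⟨β, h1, h2, -⟩ := hamin τ (hI hτ)
    exact ⟨β, h1, h2⟩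
  refine ⟨g, ?_, ?_, ?_, ?_⟩
  · -- IsSpecFun
    intro τ hτ
    obtain ⟨h1, h2, h3⟩ := hffam τ hτ
    refine ⟨?_, ?_, ?_⟩
    · intro c ζ hζ htc hbe
      rcases eq_or_lt_of_le hζ with rfl | hζ'
      · exact hg_top_be τ c htc hbe
      · rw [hg_low τ c ζ (hltsucc hζ') htc]; exact h1 c ζ (hltsucc hζ') htc hbe
    · intro c ζ hζ htc hab
      rcases eq_or_lt_of_le hζ with rfl | hζ'
      · rw [hg_top_ab τ c htc hab]
        have hp := hδpos τ c
        have hm := le_max_right (f τ (fun i => T.restrict (c i) γ)) 0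
        linarith
      · rw [hg_low τ c ζ (hltsucc hζ') htc]; exact h2 c ζ (hltsucc hζ') htc hab
    · intro b c ζ ξ hζ hξ htb htc habτ hacτ hbc
      have hζξ : ζ < ξ := by
        have hh := T.height_strictMono (hbc 0); rwa [htb 0, htc 0] at hh
      rcases eq_or_lt_of_le hξ with rfl | hξ'
      · have hζγ : ζ ≤ γ := hltsucc hζξ
        rw [hg_low τ b ζ hζγ htb, hg_top_ab τ c htc hacτ]
        have hγhc : ∀ i, γ ≤ T.height (c i) := fun i => by rw [htc i]; exact hγγ1.le
        have hble : ∀ i, b i ≤ T.restrict (c i) γ := by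
          intro i
          have hbr : T.restrict (c i) ζ = b i := T.restrict_eq (hbc i).le (htb i)
          rw [← hbr]
          exact T.restrict_mono (c i) hζγ (hγhc i)
        have htcγ : IsTupleOfHeight T (fun i => T.restrict (c i) γ) γ :=
          fun i => T.height_restrict (c i) (hγhc i)
        have hacγ : ∀ i, amin τ i ≤ T.restrict (c i) γ := fun i => (habτ i).trans (hble i)
        have key : f τ b ≤ f τ (fun i => T.restrict (c i) γ) := by
          rcases eq_or_lt_of_le hζγ with heq | hζγ'
          · have hbe : b = fun i => T.restrict (c i) γ := funext fun i =>
              (T.restrict_eq (hbc i).le (by rw [htb i, heq])).symm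
            rw [hbe]
          · refine (h3 b _ ζ γ hζγ'.le le_rfl htb htcγ habτ hacγ ?_).le
            intro i
            refine T.lt_of_le_of_height_lt (hble i) ?_
            rw [htb i, T.height_restrict (c i) (hγhc i)]
            exact hζγ'
        have hp := hδpos τ c
        have hm := le_max_left (f τ (fun i => T.restrict (c i) γ)) 0
        linarith
      · have hξγ := hltsucc hξ'
        rw [hg_low τ b ζ (hζξ.le.trans hξγ) htb, hg_low τ c ξ hξγ htc]
        exact h3 b c ζ ξ (hζξ.le.trans hξγ) hξγ htb htc habτ hacτ hbc
  · -- SuitableFamily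
    intro lo hi hlohi hhi B hBfin hBI R hRfin hRpos' t htfin htlev l hnl a hainj halev idx
      hidxinj c hcprop
    by_cases hcase : hi ≤ γ
    · obtain ⟨b, hb1, hb2, hb3⟩ := hfsuit lo hi hlohi hcase B hBfin hBI R hRfin hRpos' t htfin
        htlev l hnl a hainj halev idx hidxinj c hcprop
      refine ⟨b, hb1, hb2, fun τ hτ => ?_⟩
      intro q hq e he heaτ hlt
      have hteγ : ∀ i, T.height (e i) = hi := by
        intro i; obtain ⟨j, hj⟩ := he i; rw [← hj]; exact (hb1 j).1
      rw [hg_low τ _ lo (hlohi.le.trans hcase)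
        (fun i => T.height_restrict (e i) (by rw [hteγ i]; exact hlohi.le))] at hlt
      rw [hg_low τ e hi hcase hteγ]
      exact hb3 τ hτ q hq e he heaτ hlt
    · -- hi = γ + 1
      have hhieq : hi = γ + 1 := le_antisymm hhi
        (by rw [Ordinal.add_one_eq_succ]; exact Order.succ_le_iff.mpr (not_le.mp hcase))
      subst hhieq
      have hloγ : lo ≤ γ := hltsucc hlohi
      -- Stage A : shadow tuple b' at level γ
      obtain ⟨b', hb'ht, hab', hb'idx, hb'cons⟩ :
          ∃ b' : Fin l → α,
            (∀ i, T.height (b' i) = γ) ∧ (∀ i, a i ≤ b' i) ∧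
            (∀ k, b' (idx k) = T.restrict (c k) γ) ∧
            (∀ τ ∈ B, ∀ q ∈ R, ∀ e' : Fin (n + 1) → α, (∀ i, e' i ∈ Set.range b') →
              (∀ i, amin τ i ≤ e' i) →
              f τ (fun i => T.restrict (e' i) lo) < q → f τ e' < q) := by
        rcases eq_or_lt_of_le hloγ with rfl | hlo'
        · refine ⟨a, halev, fun i => le_rfl, ?_, ?_⟩
          · intro k
            exact (T.restrict_eq (hcprop k).2.2.le (halev (idx k))).symm
          · intro τ hτ q hq e' he' haτ hlt
            have hre : (fun i => T.restrict (e' i) lo) = e' := funext fun i => by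
              obtain ⟨j, hj⟩ := he' i
              exact T.restrict_eq le_rfl (by rw [← hj]; exact halev j)
            rwa [hre] at hlt
        · have hc' : ∀ k, T.height (T.restrict (c k) γ) = γ ∧
              T.restrict (c k) γ ∉ (∅ : Set α) ∧ a (idx k) < T.restrict (c k) γ := by
            intro k
            have hck : T.height (c k) = γ + 1 := (hcprop k).1
            have hγle : γ ≤ T.height (c k) := by rw [hck]; exact hγγ1.le
            have hlole : lo ≤ T.height (c k) := hloγ.trans hγle
            refine ⟨T.height_restrict (c k) hγle, Set.notMem_empty _, ?_⟩
            have h1 : T.restrict (c k) lo = a (idx k) :=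
              T.restrict_eq (hcprop k).2.2.le (halev (idx k))
            rw [← h1]
            refine T.lt_of_le_of_height_lt (T.restrict_mono (c k) hloγ hγle) ?_
            rw [T.height_restrict (c k) hlole, T.height_restrict (c k) hγle]
            exact hlo'
          obtain ⟨b', hb1, hb2, hb3⟩ := hfsuit lo γ hlo' le_rfl B hBfin hBI R hRfin hRpos' ∅
            Set.finite_empty (fun x hx => absurd hx (Set.notMem_empty x)) l hnl a hainj halev
            idx hidxinj (fun k => T.restrict (c k) γ) hc'
          exact ⟨b', fun i => (hb1 i).1, fun i => (hb1 i).2.2.le, hb2,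
            fun τ hτ q hq e' he' haτ hlt => hb3 τ hτ q hq e' he' haτ hlt⟩
      -- finiteness of shadow tuples
      have hE'fin : {e : Fin (n + 1) → α | ∀ i, e i ∈ Set.range b'}.Finite := by
        have hpi : {e : Fin (n + 1) → α | ∀ i, e i ∈ Set.range b'} =
            Set.pi Set.univ (fun _ => Set.range b') := by ext e; simp [Set.mem_pi]
        rw [hpi]; exact Set.Finite.pi fun _ => Set.finite_range b'
      -- choice of N
      obtain ⟨N, hN⟩ : ∃ N : ℕ, ∀ τ ∈ B, ∀ q ∈ R, ∀ e' : Fin (n + 1) → α,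
          (∀ i, e' i ∈ Set.range b') → max (f τ e') 0 < q →
          (1/2 : ℚ) ^ N < q - max (f τ e') 0 := by
        set FP := hBfin.toFinset ×ˢ hRfin.toFinset ×ˢ hE'fin.toFinset with hFP
        set Nf : Ordinal × ℚ × (Fin (n + 1) → α) → ℕ := fun p =>
          if h : (0 : ℚ) < p.2.1 - max (f p.1 p.2.2) 0 then
            (exists_pow_lt_of_lt_one h (by norm_num : (1/2 : ℚ) < 1)).choose
          else 0 with hNf
        refine ⟨FP.sup Nf, ?_⟩
        intro τ hτB q hqR e' he' hmq
        have hp : (τ, q, e') ∈ FP := by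
          rw [hFP]
          refine Finset.mem_product.mpr ⟨?_, Finset.mem_product.mpr ⟨?_, ?_⟩⟩ <;>
            rw [Set.Finite.mem_toFinset]
          exacts [hτB, hqR, he']
        have h0 : (0 : ℚ) < q - max (f τ e') 0 := by linarith
        calc (1/2 : ℚ) ^ FP.sup Nf ≤ (1/2 : ℚ) ^ Nf (τ, q, e') :=
              pow_le_pow_of_le_one (by norm_num) (by norm_num) (Finset.le_sup hp)
          _ < q - max (f τ e') 0 := by
              rw [hNf]
              simp only [dif_pos h0]
              exact (exists_pow_lt_of_lt_one h0 (by norm_num : (1/2 : ℚ) < 1)).choose_spec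
      -- pick the new nodes
      have hbadfin : (t ∪ ⋃ τ ∈ B, Set.range (amin τ)).Finite :=
        htfin.union (hBfin.biUnion fun τ _ => Set.finite_range _)
      have hpick : ∀ i : Fin l, ∃ x : α, b' i < x ∧ T.height x = γ + 1 ∧
          x ∉ t ∪ ⋃ τ ∈ B, Set.range (amin τ) ∧ N ≤ rk x :=
        fun i => T.exists_pick (b' i) (hb'ht i) _ hbadfin rk hrk N
      choose w hw1 hw2 hw3 hw4 using hpick
      set b : Fin l → α := fun i => if h : ∃ k, idx k = i then c h.choose else w i with hbdef
      have hbforce : ∀ k, b (idx k) = c k := by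
        intro k
        have h : ∃ k', idx k' = idx k := ⟨k, rfl⟩
        rw [hbdef]
        simp only [dif_pos h]
        exact congrArg c (hidxinj h.choose_spec)
      have hbw : ∀ j, ¬(∃ k, idx k = j) → b j = w j := by
        intro j hj; rw [hbdef]; simp only [dif_neg hj]
      have hbprop : ∀ i, T.height (b i) = γ + 1 ∧ b i ∉ t ∧ a i < b i := by
        intro i
        by_cases h : ∃ k, idx k = i
        · obtain ⟨k, rfl⟩ := h
          rw [hbforce k]
          exact ⟨(hcprop k).1, (hcprop k).2.1, (hcprop k).2.2⟩
        · rw [hbw i h]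
          exact ⟨hw2 i, fun hmem => hw3 i (Set.mem_union_left _ hmem),
            lt_of_le_of_lt (hab' i) (hw1 i)⟩
      have hrb : ∀ j, T.restrict (b j) γ = b' j := by
        intro j
        by_cases h : ∃ k, idx k = j
        · obtain ⟨k, rfl⟩ := h
          rw [hbforce k, ← hb'idx k]
        · rw [hbw j h]
          exact T.restrict_eq (hw1 j).le (hb'ht j)
      refine ⟨b, hbprop, hbforce, ?_⟩
      intro τ hτB q hq e he heaτ hlt
      obtain ⟨βτ, hβht, hβinj⟩ := hmin τ (hBI hτB)
      have hJ : ∀ i, ∃ j, b j = e i := fun i => he i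
      choose J hJ using hJ
      have hteh : IsTupleOfHeight T e (γ + 1) := fun i => by
        rw [← hJ i]; exact (hbprop (J i)).1
      have heinj : Function.Injective e := by
        intro i j hij
        have ha1 : amin τ i ≤ e i := heaτ i
        have ha2 : amin τ j ≤ e i := by rw [hij]; exact heaτ j
        have hβle : βτ ≤ γ + 1 := by
          have hh := T.height_mono ha1; rwa [hβht i, hteh i] at hh
        by_cases hβ : βτ = γ + 1
        · apply hβinj
          have e1 : amin τ i = e i :=
            T.eq_of_le_of_height_eq ha1 (by rw [hβht i, hteh i, hβ])
          have e2 : amin τ j = e i :=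
            T.eq_of_le_of_height_eq ha2 (by rw [hβht j, hteh i, hβ])
          rw [e1, e2]
        · have hβlt : βτ < γ + 1 := lt_of_le_of_ne hβle hβ
          have l1 : amin τ i < e i :=
            T.lt_of_le_of_height_lt ha1 (by rw [hβht i, hteh i]; exact hβlt)
          have l2 : amin τ j < e i :=
            T.lt_of_le_of_height_lt ha2 (by rw [hβht j, hteh i]; exact hβlt)
          apply hβinj
          rcases T.pred_linear l1 l2 with h | h
          · exact T.eq_of_le_of_height_eq h (by rw [hβht i, hβht j])
          · exact (T.eq_of_le_of_height_eq h (by rw [hβht j, hβht i])).symm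
      have hi0 : ∃ i0 : Fin (n + 1), ∀ k, e i0 ≠ c k := by
        by_contra hcon
        push_neg at hcon
        choose K hK using hcon
        have hsub : Finset.univ.image e ⊆ Finset.univ.image c := by
          intro x hx
          rw [Finset.mem_image] at hx ⊢
          obtain ⟨i, -, rfl⟩ := hx
          exact ⟨K i, Finset.mem_univ _, (hK i).symm⟩
        have hc1 : (Finset.univ.image e).card = n + 1 := by
          rw [Finset.card_image_of_injective _ heinj, Finset.card_univ, Fintype.card_fin]
        have hc2 : (Finset.univ.image c).card ≤ n :=
          Finset.card_image_le.trans (by rw [Finset.card_univ, Fintype.card_fin])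
        have hc3 := Finset.card_le_card hsub
        omega
      obtain ⟨i0, hi0⟩ := hi0
      have hJi0 : ¬∃ k, idx k = J i0 := by
        rintro ⟨k, hk⟩
        exact hi0 k (by rw [← hJ i0, ← hk, hbforce])
      have hew : e i0 = w (J i0) := by rw [← hJ i0, hbw _ hJi0]
      have hβle : βτ ≤ γ + 1 := by
        have hh := T.height_mono (heaτ i0); rwa [hβht i0, hteh i0] at hh
      have hβγ : βτ ≤ γ := by
        rcases eq_or_lt_of_le hβle with hβ | hβ
        · exfalso
          have heq : amin τ i0 = e i0 :=
            T.eq_of_le_of_height_eq (heaτ i0) (by rw [hβht i0, hteh i0, hβ])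
          apply hw3 (J i0)
          rw [← hew, ← heq]
          exact Set.mem_union_right _ (Set.mem_biUnion hτB ⟨i0, rfl⟩)
        · exact hltsucc hβ
      have hγhe : ∀ i, γ ≤ T.height (e i) := fun i => by rw [hteh i]; exact hγγ1.le
      have he'b' : ∀ i, (fun i => T.restrict (e i) γ) i ∈ Set.range b' := by
        intro i
        simp only
        rw [← hJ i, hrb (J i)]
        exact ⟨J i, rfl⟩
      have haτe' : ∀ i, amin τ i ≤ (fun i => T.restrict (e i) γ) i := by
        intro i
        simp only
        rw [← T.restrict_eq (heaτ i) (hβht i)]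
        exact T.restrict_mono (e i) hβγ (hγhe i)
      have hrlo : ∀ i, lo ≤ T.height (e i) := fun i => by
        rw [hteh i]; exact hloγ.trans hγγ1.le
      rw [hg_low τ _ lo hloγ (fun i => T.height_restrict (e i) (hrlo i))] at hlt
      have hshadow : (fun i => T.restrict ((fun i => T.restrict (e i) γ) i) lo) =
          (fun i => T.restrict (e i) lo) := by
        funext i
        exact T.restrict_restrict (e i) hloγ (hγhe i)
      have hfe' : f τ (fun i => T.restrict (e i) γ) < q :=
        hb'cons τ hτB q hq _ he'b' haτe' (by rw [hshadow]; exact hlt)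
      have hmq : max (f τ (fun i => T.restrict (e i) γ)) 0 < q := max_lt hfe' (hRpos' q hq)
      rw [hg_top_ab τ e hteh heaτ]
      have hNlt := hN τ hτB q hq _ he'b' hmq
      have hrk1 : N ≤ rk (e i0) := by rw [hew]; exact hw4 (J i0)
      have hrk2 : rk (e i0) ≤ Finset.univ.sup fun i => rk (e i) :=
        Finset.le_sup (f := fun i => rk (e i)) (Finset.mem_univ i0)
      have hpow : (1/2 : ℚ) ^ (Finset.univ.sup fun i => rk (e i)) ≤ (1/2 : ℚ) ^ N :=
        pow_le_pow_of_le_one (by norm_num) (by norm_num) (hrk1.trans hrk2)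
      have hδle := hδrt τ e
      linarith
  · -- SpecExtends
    intro τ hτ cc ζ hζ htc hside
    exact hg_low τ cc ζ hζ htc
  · -- SpecConsistent on X
    intro τ hτ q hq cc hcX hcaτ hlt
    have htc : IsTupleOfHeight T cc (γ + 1) := fun i => hXlev _ (hcX i)
    have hre : IsTupleOfHeight T (fun i => T.restrict (cc i) γ) γ :=
      fun i => T.height_restrict (cc i) (by rw [htc i]; exact hγγ1.le)
    rw [hg_low τ _ γ le_rfl hre] at hlt
    rw [hg_top_ab τ cc htc hcaτ]
    exact hδqt τ cc q hq (max_lt hlt (hQpos q hq))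
end
end

section
/- (Key Property for subtree functions) Let α < β < ω₁. Suppose a_0,…,a_{n-1} are distinct elements of T_α and G = {g_τ : τ ∈ I} is an indexed family of subtree functions on T↾(β+1) such that the family of restrictions {g_τ↾(α+1) : τ ∈ I} is separated on {a_0,…,a_{n-1}}. Let t ⊆ T_β be finite. Then there exist b_0,…,b_{n-1} ∈ T_β \ t such that a_i <_T b_i for all i < n and, for all τ ∈ I, {a_0,…,a_{n-1}} and {b_0,…,b_{n-1}} are g_τ-consistent. -/
noncomputable section

variable {α : Type} [PartialOrder α]

/-- `g` is a subtree function on `T↾(β+1)` (its values only matter on nodes of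
height `≤ β`): it takes value `true` at the root, is downwards closed where it
takes value `true`, and above every node it takes value `true` at infinitely
many nodes of each higher level `≤ β`. -/
def IsSubtreeFun (T : OmegaOneTree α) (β : Ordinal) (g : α → Bool) : Prop :=
  (∀ x : α, T.height x = 0 → g x = true) ∧
  (∀ x : α, T.height x ≤ β → g x = true →
    ∀ γ : Ordinal, γ < T.height x → g (T.restrict x γ) = true) ∧
  (∀ (a : α) (ξ : Ordinal), T.height a < ξ → ξ ≤ β →
    {b : α | a < b ∧ T.height b = ξ ∧ g b = true}.Infinite)

/-- `g` extends `f` on `T↾(γ+1)` (i.e. `f ⊆ g` for subtree functions). -/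
def SubExtends (T : OmegaOneTree α) (γ : Ordinal) (f g : α → Bool) : Prop :=
  ∀ x : α, T.height x ≤ γ → g x = f x

/-- `X↾lo` and `X` are `g`-consistent: for all `x ∈ X`, `g(x↾lo) = 1` iff `g(x) = 1`. -/
def SubConsistent (T : OmegaOneTree α) (g : α → Bool) (lo : Ordinal) (X : Set α) : Prop :=
  ∀ x ∈ X, (g (T.restrict x lo) = true ↔ g x = true)

/-- The indexed family `{g τ : τ : ι}` is separated on `X`: for every `x ∈ X`
there is at most one index `τ` with `g τ x = 1`. -/
def SubSepOn {ι : Type} (g : ι → α → Bool) (X : Set α) : Prop :=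
  ∀ x ∈ X, ∀ τ σ : ι, g τ x = true → g σ x = true → τ = σ

/-- There are infinitely many nodes above `x` at any higher level `hi < ω₁`. -/
lemma infinite_above (T : OmegaOneTree α) (x : α) {hi : Ordinal}
    (hx : T.height x < hi) (hhi : hi < omega1) :
    {b : α | x < b ∧ T.height b = hi}.Infinite := by
  classical
  have h1 : T.height x + 1 ≤ hi := Order.add_one_le_iff.mpr hx
  have hS := T.splitting x
  rw [← Set.infinite_coe_iff] at hS ⊢
  have F : ∀ y : {y : α | x < y ∧ T.height y = T.height x + 1},
      ∃ b : {b : α | x < b ∧ T.height b = hi}, (y : α) ≤ (b : α) := by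
    rintro ⟨y, hy1, hy2⟩
    by_cases h2 : T.height y = hi
    · exact ⟨⟨y, hy1, h2⟩, le_rfl⟩
    · have hlt : T.height y < hi := lt_of_le_of_ne (hy2 ▸ h1) h2
      obtain ⟨b, hb1, hb2⟩ := T.exists_above y hlt hhi
      exact ⟨⟨b, lt_trans hy1 hb1, hb2⟩, le_of_lt hb1⟩
  choose f hf using F
  refine Infinite.of_injective f ?_
  intro y1 y2 heq
  have e1 : T.restrict (f y1 : α) (T.height x + 1) = (y1 : α) :=
    T.restrict_eq (hf y1) y1.2.2
  have e2 : T.restrict (f y2 : α) (T.height x + 1) = (y2 : α) :=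
    T.restrict_eq (hf y2) y2.2.2
  have : (y1 : α) = (y2 : α) := by rw [← e1, ← e2, heq]
  exact Subtype.ext this

/-- Proposition 4.6 (Key Property for subtree functions). -/
theorem subtree_key_property
    (T : OmegaOneTree α) {ι : Type}
    (lo hi : Ordinal) (hlohi : lo < hi) (hhi : hi < omega1)
    (n : ℕ) (a : Fin n → α) (hainj : Function.Injective a)
    (halev : ∀ i, T.height (a i) = lo)
    (g : ι → α → Bool) (hg : ∀ τ, IsSubtreeFun T hi (g τ))
    (hsep : SubSepOn g (Set.range a))
    (t : Set α) (htfin : t.Finite) (htlev : ∀ x ∈ t, T.height x = hi) :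
    ∃ b : Fin n → α,
      (∀ i, T.height (b i) = hi ∧ b i ∉ t ∧ a i < b i) ∧
      ∀ τ : ι, SubConsistent T (g τ) lo (Set.range b) := by
  classical
  have key : ∀ i : Fin n, ∃ bi : α, T.height bi = hi ∧ bi ∉ t ∧ a i < bi ∧
      ∀ τ : ι, (g τ (a i) = true ↔ g τ bi = true) := by
    intro i
    have hdown : ∀ (τ : ι) (bi : α), T.height bi = hi → a i < bi →
        g τ bi = true → g τ (a i) = true := by
      intro τ bi hbih habi hgbi
      have hres : T.restrict bi lo = a i := T.restrict_eq (le_of_lt habi) (halev i)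
      have := (hg τ).2.1 bi (le_of_eq hbih) hgbi lo (by rw [hbih]; exact hlohi)
      rwa [hres] at this
    by_cases h : ∃ τ : ι, g τ (a i) = true
    · obtain ⟨τ, hτ⟩ := h
      have hinf : {b : α | a i < b ∧ T.height b = hi ∧ g τ b = true}.Infinite :=
        (hg τ).2.2 (a i) hi (by rw [halev i]; exact hlohi) le_rfl
      obtain ⟨bi, hbiS, hbit⟩ := (hinf.diff htfin).nonempty
      refine ⟨bi, hbiS.2.1, hbit, hbiS.1, fun σ => ⟨fun hσ => ?_, fun hσ =>
        hdown σ bi hbiS.2.1 hbiS.1 hσ⟩⟩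
      have : σ = τ := hsep (a i) ⟨i, rfl⟩ σ τ hσ hτ
      rw [this]; exact hbiS.2.2
    · push_neg at h
      have hinf := infinite_above T (a i) (by rw [halev i]; exact hlohi) hhi
      obtain ⟨bi, hbiS, hbit⟩ := (hinf.diff htfin).nonempty
      refine ⟨bi, hbiS.2, hbit, hbiS.1, fun σ => ⟨fun hσ => absurd hσ (h σ),
        fun hσ => absurd (hdown σ bi hbiS.2 hbiS.1 hσ) (h σ)⟩⟩
  choose b hb using key
  refine ⟨b, fun i => ⟨(hb i).1, (hb i).2.1, (hb i).2.2.1⟩, ?_⟩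
  rintro τ x ⟨i, rfl⟩
  have hres : T.restrict (b i) lo = a i :=
    T.restrict_eq (le_of_lt (hb i).2.2.1) (halev i)
  rw [hres]
  exact (hb i).2.2.2 τ
end
end

section
/- Assume CH (2^ℵ₀ = ℵ₁). Then the subtree forcing poset ℙ is ω₂-c.c.: every antichain of ℙ has cardinality less than ℵ₂. -/
noncomputable section

variable {α : Type} [PartialOrder α]

/-- A condition of the subtree forcing `ℙ`: a function with countable domain
contained in `κ`, assigning to each index in its domain a subtree function on
`T↾(top+1)` for a common top level `top < ω₁`. -/
structure SubtreeCond (T : OmegaOneTree α) (κ : Ordinal) where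
  dom : Set Ordinal
  dom_sub : dom ⊆ Set.Iio κ
  dom_countable : dom.Countable
  top : Ordinal
  top_lt : top < omega1
  fn : Ordinal → α → Bool
  fn_subtree : ∀ τ ∈ dom, IsSubtreeFun T top (fn τ)

/-- The order on the subtree forcing: `q ≤ p` iff `dom p ⊆ dom q` and for every
`τ ∈ dom p`, `q(τ)` extends `p(τ)` as a subtree function. -/
def SubtreeCondLE {T : OmegaOneTree α} {κ : Ordinal} (q p : SubtreeCond T κ) : Prop :=
  p.dom ⊆ q.dom ∧ p.top ≤ q.top ∧
    ∀ τ ∈ p.dom, ∀ x : α, T.height x ≤ p.top → q.fn τ x = p.fn τ x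

/-- Compatibility in the subtree forcing. -/
def SubtreeCompatible {T : OmegaOneTree α} {κ : Ordinal} (p q : SubtreeCond T κ) : Prop :=
  ∃ r : SubtreeCond T κ, SubtreeCondLE r p ∧ SubtreeCondLE r q

namespace SubtreeCC
open Cardinal Set
universe u v

lemma aleph_one_succ : (Cardinal.aleph 1 : Cardinal.{u}) = Order.succ ℵ₀ := by
  rw [← Cardinal.aleph_zero, ← Cardinal.aleph_succ, Ordinal.succ_zero]

lemma aleph_two_succ : (Cardinal.aleph 2 : Cardinal.{u}) = Order.succ (Cardinal.aleph 1) := by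
  have h2 : (2 : Ordinal.{u}) = Order.succ 1 := by
    rw [← Ordinal.add_one_eq_succ, one_add_one_eq_two]
  rw [h2, Cardinal.aleph_succ]

lemma lift_aleph_one : Cardinal.lift.{v, u} (Cardinal.aleph 1) = Cardinal.aleph 1 := by
  rw [aleph_one_succ, Cardinal.lift_succ, Cardinal.lift_aleph0, ← aleph_one_succ]

lemma lift_aleph_two : Cardinal.lift.{v, u} (Cardinal.aleph 2) = Cardinal.aleph 2 := by
  rw [aleph_two_succ, Cardinal.lift_succ, lift_aleph_one, ← aleph_two_succ]

lemma CH_transfer (h : (2 : Cardinal.{u}) ^ (Cardinal.aleph0 : Cardinal.{u}) = Cardinal.aleph 1) :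
    (2 : Cardinal.{v}) ^ (Cardinal.aleph0 : Cardinal.{v}) = Cardinal.aleph 1 := by
  have ha : (2 : Cardinal.{max u v}) ^ (Cardinal.aleph0 : Cardinal.{max u v}) = Cardinal.aleph 1 := by
    have := congrArg (Cardinal.lift.{v, u}) h
    rwa [Cardinal.lift_power, Cardinal.lift_two, Cardinal.lift_aleph0, lift_aleph_one] at this
  apply Cardinal.lift_injective.{u, v}
  rwa [Cardinal.lift_power, Cardinal.lift_two, Cardinal.lift_aleph0, lift_aleph_one]

lemma aleph0_le_aleph_one : (Cardinal.aleph0 : Cardinal.{u}) ≤ Cardinal.aleph 1 :=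
  Cardinal.aleph0_le_aleph 1

lemma mul_aleph_one : (Cardinal.aleph 1 : Cardinal.{u}) * Cardinal.aleph 1 = Cardinal.aleph 1 :=
  Cardinal.mul_eq_self aleph0_le_aleph_one

lemma mk_le_a0 {X : Type u} {s : Set X} (h : s.Countable) : #s ≤ ℵ₀ :=
  Cardinal.mk_le_aleph0_iff.2 (Set.countable_coe_iff.mpr h)

lemma unionBound {ι X : Type u} (f : ι → Set X) (hι : #ι ≤ Cardinal.aleph 1)
    (h : ∀ i, #(f i) ≤ Cardinal.aleph 1) : #(⋃ i, f i) ≤ Cardinal.aleph 1 := by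
  rcases isEmpty_or_nonempty ι with hE | hN
  · rw [Set.iUnion_of_empty]
    simp
  · calc #(⋃ i, f i) ≤ #ι * ⨆ i, #(f i) := Cardinal.mk_iUnion_le f
      _ ≤ Cardinal.aleph 1 * Cardinal.aleph 1 := mul_le_mul' hι (ciSup_le' h)
      _ = Cardinal.aleph 1 := mul_aleph_one

lemma fiberBound {ι C : Type u} (s : Set ι) (f : ι → C) (hC : #C ≤ Cardinal.aleph 1)
    (h : ∀ c : C, #{i | i ∈ s ∧ f i = c} ≤ Cardinal.aleph 1) : #s ≤ Cardinal.aleph 1 := by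
  have hsub : s ⊆ ⋃ c : C, {i | i ∈ s ∧ f i = c} := fun i hi => Set.mem_iUnion.2 ⟨f i, hi, rfl⟩
  exact (Cardinal.mk_le_mk_of_subset hsub).trans (unionBound _ hC h)

lemma fiberBig {ι C : Type u} (s : Set ι) (f : ι → C) (hC : #C ≤ Cardinal.aleph 1)
    (hs : ¬ #s ≤ Cardinal.aleph 1) : ∃ c : C, ¬ #{i | i ∈ s ∧ f i = c} ≤ Cardinal.aleph 1 := by
  by_contra h
  exact hs (fiberBound s f hC (not_exists_not.mp h))

lemma countableSetsBound {X : Type u} (hX : #X ≤ Cardinal.aleph 1)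
    (hCH : (2 : Cardinal.{u}) ^ (Cardinal.aleph0 : Cardinal.{u}) = Cardinal.aleph 1) :
    #{s : Set X // s.Countable} ≤ Cardinal.aleph 1 := by
  classical
  have hsurj : Function.Surjective
      (fun g : Option (ℕ → X) => (match g with
        | none => ⟨∅, Set.countable_empty⟩
        | some f => ⟨Set.range f, Set.countable_range f⟩ : {s : Set X // s.Countable})) := by
    rintro ⟨s, hs⟩
    rcases s.eq_empty_or_nonempty with rfl | hne
    · exact ⟨none, rfl⟩
    · obtain ⟨f, hf⟩ := hs.exists_eq_range hne
      exact ⟨some f, by simp [← hf]⟩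
  have h1 : #{s : Set X // s.Countable} ≤ #(Option (ℕ → X)) := Cardinal.mk_le_of_surjective hsurj
  have h3 : #(ℕ → X) = #X ^ (Cardinal.aleph0 : Cardinal.{u}) := by
    rw [Cardinal.mk_arrow, Cardinal.lift_uzero, Cardinal.mk_nat, Cardinal.lift_aleph0]
  have h4 : #X ^ (Cardinal.aleph0 : Cardinal.{u}) ≤ Cardinal.aleph 1 := by
    calc #X ^ (Cardinal.aleph0 : Cardinal.{u}) ≤ (Cardinal.aleph 1) ^ (Cardinal.aleph0 : Cardinal.{u}) :=
      Cardinal.power_le_power_right hX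
    _ = Cardinal.aleph 1 := by rw [← hCH, ← Cardinal.power_mul, Cardinal.aleph0_mul_aleph0]
  refine h1.trans ?_
  rw [Cardinal.mk_option, h3]
  calc #X ^ (Cardinal.aleph0 : Cardinal.{u}) + 1 ≤ Cardinal.aleph 1 + 1 := add_le_add_left h4 1
    _ = Cardinal.aleph 1 := Cardinal.add_one_eq aleph0_le_aleph_one

/-- The canonical well-order of type `ω₁`. -/
abbrev W1 : Type u := ((Cardinal.aleph 1 : Cardinal.{u}).ord).ToType

lemma mk_W1 : #(W1.{u}) = Cardinal.aleph 1 := by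
  rw [Cardinal.mk_toType, Cardinal.card_ord]

lemma Iio_W1_countable (t : W1.{u}) : #(Set.Iio t) ≤ ℵ₀ := by
  have h1 : #(Set.Iio t) = (@Ordinal.typein W1.{u} (· < ·) isWellOrder_lt t).card := by
    rw [← Ordinal.type_subrel, Ordinal.card_type]
    rfl
  rw [h1]
  have h2 : @Ordinal.typein W1.{u} (· < ·) isWellOrder_lt t < (Cardinal.aleph 1 : Cardinal.{u}).ord := by
    have := @Ordinal.typein_lt_type W1.{u} (· < ·) isWellOrder_lt t
    rwa [Ordinal.type_toType] at this
  have h3 := (Cardinal.lt_ord).1 h2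
  exact Order.lt_succ_iff.1 (lt_of_lt_of_eq h3 aleph_one_succ)

theorem kernel {W V : Type u} [LinearOrder W]
    (hmkW : ¬ #W ≤ Cardinal.aleph 1)
    (hIic : ∀ b : W, #(Set.Iic b) ≤ Cardinal.aleph 1)
    (hV : #V ≤ Cardinal.aleph 1)
    (hCH : (2 : Cardinal.{u}) ^ (Cardinal.aleph0 : Cardinal.{u}) = Cardinal.aleph 1)
    (d : W → Set W) (hd : ∀ i, (d i).Countable)
    (F : W → W → V)
    (H : ∀ i j : W, i ≠ j → ∃ τ, τ ∈ d i ∧ τ ∈ d j ∧ F i τ ≠ F j τ) : False := by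
  classical
  have hWne : Nonempty W := by
    by_contra hW
    rw [not_nonempty_iff] at hW
    exact hmkW (by simp [Cardinal.mk_eq_zero W])
  -- strict upper bounds for small sets
  have hbdd : ∀ s : Set W, #s ≤ Cardinal.aleph 1 → ∃ b : W, ∀ x ∈ s, x < b := by
    intro s hs
    by_contra hb
    push_neg at hb
    apply hmkW
    have cover : (Set.univ : Set W) ⊆ ⋃ x : s, Set.Iic (x : W) := by
      intro b _
      obtain ⟨x, hx, hbx⟩ := hb b
      exact Set.mem_iUnion.2 ⟨⟨x, hx⟩, hbx⟩
    have := (Cardinal.mk_le_mk_of_subset cover).trans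
      (unionBound _ hs (fun x => hIic (x : W)))
    simpa using this
  -- Claim A
  obtain ⟨β₀, hβ₀⟩ : ∃ β₀ : W, ∀ γ : W,
      ¬ #{i : W | d i ∩ Set.Ico β₀ γ = ∅} ≤ Cardinal.aleph 1 := by
    by_contra hcon
    push_neg at hcon
    choose g hg using hcon
    -- recursion over W1
    set step : ∀ t : W1.{u}, (∀ s : W1.{u}, s < t → W) → W := fun t IH =>
      if h : ∃ b : W, ∀ (s : W1.{u}) (hs : s < t), IH s hs < b ∧ g (IH s hs) < b then h.choose
      else Classical.arbitrary W with hstep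
    set f : W1.{u} → W := (IsWellFounded.wf (α := W1.{u}) (r := (· < ·))).fix step with hfdef
    have hfix : ∀ t, f t = step t (fun s _ => f s) :=
      fun t => WellFounded.fix_eq _ step t
    have key : ∀ t : W1.{u}, ∀ s : W1.{u}, s < t → f s < f t ∧ g (f s) < f t := by
      intro t
      have hEx : ∃ b : W, ∀ (s : W1.{u}) (hs : s < t), f s < b ∧ g (f s) < b := by
        have hsmall : #(⋃ s : Set.Iio t, ({f s.1, g (f s.1)} : Set W)) ≤ Cardinal.aleph 1 := by
          apply unionBound
          · exact (Iio_W1_countable t).trans aleph0_le_aleph_one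
          · intro s
            have : ({f s.1, g (f s.1)} : Set W).Countable :=
              ((Set.finite_singleton _).insert _).countable
            exact (mk_le_a0 this).trans aleph0_le_aleph_one
        obtain ⟨b, hb⟩ := hbdd _ hsmall
        refine ⟨b, fun s hs => ⟨?_, ?_⟩⟩
        · exact hb _ (Set.mem_iUnion.2 ⟨⟨s, hs⟩, by simp⟩)
        · exact hb _ (Set.mem_iUnion.2 ⟨⟨s, hs⟩, by simp⟩)
      intro s hst
      have hft : f t = hEx.choose := by
        rw [hfix t, hstep]
        exact dif_pos hEx
      rw [hft]
      exact hEx.choose_spec s hst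
    -- the bad union
    have hbad : #(⋃ t : W1.{u}, {i : W | d i ∩ Set.Ico (f t) (g (f t)) = ∅}) ≤ Cardinal.aleph 1 := by
      apply unionBound
      · exact le_of_eq mk_W1
      · intro t; exact hg (f t)
    obtain ⟨istar, histar⟩ : ∃ i : W, ∀ t : W1.{u}, d i ∩ Set.Ico (f t) (g (f t)) ≠ ∅ := by
      by_contra hcc
      push_neg at hcc
      apply hmkW
      have cover : (Set.univ : Set W) ⊆ ⋃ t : W1.{u}, {i : W | d i ∩ Set.Ico (f t) (g (f t)) = ∅} := by
        intro i _
        obtain ⟨t, ht⟩ := hcc i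
        exact Set.mem_iUnion.2 ⟨t, ht⟩
      have := (Cardinal.mk_le_mk_of_subset cover).trans hbad
      simpa using this
    have hpick : ∀ t : W1.{u}, ∃ x, x ∈ d istar ∩ Set.Ico (f t) (g (f t)) := by
      intro t
      rcases Set.eq_empty_or_nonempty (d istar ∩ Set.Ico (f t) (g (f t))) with he | hne
      · exact absurd he (histar t)
      · exact hne
    choose pick hpick2 using hpick
    have hpickinj : Function.Injective pick := by
      intro s t hst
      by_contra hne
      rcases lt_or_gt_of_ne hne with hlt | hlt
      · have h1 : pick s < g (f s) := (hpick2 s).2.2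
        have h2 : f t ≤ pick t := (hpick2 t).2.1
        have h3 := (key t s hlt).2
        rw [hst] at h1
        exact absurd (h1.trans (h3.trans_le h2)) (lt_irrefl _)
      · have h1 : pick t < g (f t) := (hpick2 t).2.2
        have h2 : f s ≤ pick s := (hpick2 s).2.1
        have h3 := (key s t hlt).2
        rw [← hst] at h1
        exact absurd (h1.trans (h3.trans_le h2)) (lt_irrefl _)
    have hinj2 : Function.Injective (fun t : W1.{u} => (⟨pick t, (hpick2 t).1⟩ : ↥(d istar))) := by
      intro s t h
      exact hpickinj (congrArg Subtype.val h)
    have h1 : Cardinal.aleph 1 ≤ #(d istar) := by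
      rw [← mk_W1]
      exact Cardinal.mk_le_of_injective hinj2
    have h2 : #(d istar) ≤ ℵ₀ := mk_le_a0 (hd istar)
    exact absurd (h1.trans h2) (not_le.2 Cardinal.aleph0_lt_aleph_one)
  -- colors
  set IoB := ↥(Set.Iio β₀) with hIoB
  set Low := IoB × V with hLow
  have hLowcard : #Low ≤ Cardinal.aleph 1 := by
    rw [hLow, Cardinal.mk_prod, Cardinal.lift_id, Cardinal.lift_id]
    calc #IoB * #V ≤ Cardinal.aleph 1 * Cardinal.aleph 1 := by
          apply mul_le_mul'
          · exact (Cardinal.mk_le_mk_of_subset (Set.Iio_subset_Iic_self)).trans (hIic β₀)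
          · exact hV
      _ = Cardinal.aleph 1 := mul_aleph_one
  set cset : W → Set Low := fun i => (fun w : IoB => (w, F i w.1)) '' (Subtype.val ⁻¹' (d i)) with hcset
  have hcsetc : ∀ i, (cset i).Countable := fun i =>
    (((hd i).preimage Subtype.val_injective).image _)
  set C := {s : Set Low // s.Countable} with hC
  have hCcard : #C ≤ Cardinal.aleph 1 := countableSetsBound hLowcard hCH
  set color : W → C := fun i => ⟨cset i, hcsetc i⟩ with hcolor
  have hmem : ∀ i (w : IoB), w.1 ∈ d i → (w, F i w.1) ∈ cset i := by
    intro i w hw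
    exact ⟨w, hw, rfl⟩
  have hmem' : ∀ i (w : IoB) (vv : V), (w, vv) ∈ cset i → w.1 ∈ d i ∧ F i w.1 = vv := by
    rintro i w vv ⟨w', hw', heq⟩
    rw [Prod.ext_iff] at heq
    obtain ⟨h1, h2⟩ := heq
    subst h1
    exact ⟨hw', h2⟩
  -- big color classes
  set G : W → Set W := fun γ => {i : W | d i ∩ Set.Ico β₀ γ = ∅} with hG
  have hfib : ∀ γ : W, ∃ c : C, ¬ #{i | i ∈ G γ ∧ color i = c} ≤ Cardinal.aleph 1 :=
    fun γ => fiberBig (G γ) color hCcard (hβ₀ γ)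
  choose cc hcc using hfib
  -- an unbounded color
  obtain ⟨cstar, hcstar⟩ : ∃ c : C, ∀ b : W, ∃ γ : W, cc γ = c ∧ b ≤ γ := by
    by_contra hcon2
    push_neg at hcon2
    choose bnd hbnd using hcon2
    apply hmkW
    have := fiberBound (Set.univ : Set W) cc hCcard (fun c => ?_)
    · simpa using this
    · refine (Cardinal.mk_le_mk_of_subset ?_).trans (hIic (bnd c))
      rintro γ ⟨-, hγ⟩
      exact le_of_lt (hbnd c γ hγ)
  -- pick i₀
  obtain ⟨γ₀, hγ₀c, -⟩ := hcstar (Classical.arbitrary W)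
  have hS₀ : ¬ #{i | i ∈ G γ₀ ∧ color i = cstar} ≤ Cardinal.aleph 1 := by
    rw [← hγ₀c]; exact hcc γ₀
  obtain ⟨i₀, hi₀G, hi₀c⟩ : ∃ i, i ∈ G γ₀ ∧ color i = cstar := by
    by_contra hne
    push_neg at hne
    apply hS₀
    have : {i | i ∈ G γ₀ ∧ color i = cstar} = ∅ := by
      ext i; simp only [Set.mem_setOf_eq, Set.mem_empty_iff_false, iff_false, not_and]
      exact hne i
    rw [this]
    simp
  -- bound of d i₀
  obtain ⟨γ₁, hγ₁⟩ := hbdd (d i₀) ((mk_le_a0 (hd i₀)).trans aleph0_le_aleph_one)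
  obtain ⟨γ₂, hγ₂c, hγ₂ge⟩ := hcstar γ₁
  have hS₁ : ¬ #{i | i ∈ G γ₂ ∧ color i = cstar} ≤ Cardinal.aleph 1 := by
    rw [← hγ₂c]; exact hcc γ₂
  obtain ⟨j, hjmem, hjne⟩ : ∃ j, (j ∈ G γ₂ ∧ color j = cstar) ∧ j ≠ i₀ := by
    by_contra hcon3
    push_neg at hcon3
    apply hS₁
    have hsub : {i | i ∈ G γ₂ ∧ color i = cstar} ⊆ {i₀} := by
      intro i hi
      rcases hi with ⟨h1, h2⟩
      simp only [Set.mem_singleton_iff]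
      exact hcon3 i ⟨h1, h2⟩
    refine (Cardinal.mk_le_mk_of_subset hsub).trans ?_
    rw [Cardinal.mk_singleton]
    exact le_trans Cardinal.one_le_aleph0 aleph0_le_aleph_one
  obtain ⟨hjG, hjc⟩ := hjmem
  -- the conflict
  obtain ⟨τ, hτi, hτj, hFne⟩ := H i₀ j (Ne.symm hjne)
  rcases lt_or_ge τ β₀ with hτβ | hτβ
  · -- low conflict: colors agree
    have hceq : cset i₀ = cset j := by
      have := hi₀c.trans hjc.symm
      exact congrArg Subtype.val this
    have h1 : ((⟨τ, hτβ⟩ : IoB), F i₀ τ) ∈ cset i₀ := hmem i₀ ⟨τ, hτβ⟩ hτi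
    rw [hceq] at h1
    obtain ⟨-, h3⟩ := hmem' j ⟨τ, hτβ⟩ (F i₀ τ) h1
    exact hFne h3.symm
  · -- high conflict
    have hτγ₁ : τ < γ₁ := hγ₁ τ hτi
    have hτγ₂ : τ < γ₂ := hτγ₁.trans_le hγ₂ge
    have : τ ∈ d j ∩ Set.Ico β₀ γ₂ := ⟨hτj, hτβ, hτγ₂⟩
    have hempty : d j ∩ Set.Ico β₀ γ₂ = ∅ := hjG
    rw [hempty] at this
    exact this



-- Sβ countable
lemma level_le_countable {α : Type} [PartialOrder α] (T : OmegaOneTree α) {β : Ordinal.{0}}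
    (hβ : β < omega1.{0}) : {x : α | T.height x ≤ β}.Countable := by
  have hequ : {x : α | T.height x ≤ β} = ⋃ γ ∈ Set.Iic β, {x : α | T.height x = γ} := by
    ext x
    simp only [Set.mem_setOf_eq, Set.mem_iUnion, Set.mem_Iic, exists_prop]
    exact ⟨fun h => ⟨T.height x, h, rfl⟩, fun ⟨γ, hγ, he⟩ => he ▸ hγ⟩
  rw [hequ]
  refine Set.Countable.biUnion ?_ (fun γ _ => T.level_countable γ)
  -- Iic β is countable
  rw [← Set.countable_coe_iff, ← Cardinal.mk_le_aleph0_iff]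
  have h1 : Set.Iic β = Set.Iio (β + 1) := by
    ext γ
    rw [Set.mem_Iic, Set.mem_Iio, Ordinal.add_one_eq_succ, Order.lt_succ_iff]
  rw [h1, Ordinal.mk_Iio_ordinal]
  have h2 : (β + 1).card ≤ ℵ₀ := by
    rw [Ordinal.add_one_eq_succ, Ordinal.card_succ]
    have h3 : β.card < Cardinal.aleph 1 := Cardinal.lt_ord.1 hβ
    have h4 : β.card ≤ ℵ₀ :=
      Order.lt_succ_iff.1 (lt_of_lt_of_eq h3 (by rw [← Cardinal.succ_aleph0]))
    calc β.card + 1 ≤ ℵ₀ + 1 := add_le_add_left h4 1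
      _ = ℵ₀ := Cardinal.add_one_eq le_rfl
  calc Cardinal.lift.{1} (β+1).card ≤ Cardinal.lift.{1} ℵ₀ := Cardinal.lift_le.2 h2
    _ = ℵ₀ := Cardinal.lift_aleph0

-- conflict extraction
lemma conflict_of_incompatible {α : Type} [PartialOrder α] {T : OmegaOneTree α} {κ : Ordinal}
    (p q : SubtreeCond T κ) (htop : p.top = q.top) (h : ¬ SubtreeCompatible p q) :
    ∃ τ, τ ∈ p.dom ∧ τ ∈ q.dom ∧ ∃ x : α, T.height x ≤ p.top ∧ p.fn τ x ≠ q.fn τ x := by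
  classical
  by_contra hcon
  push_neg at hcon
  apply h
  refine ⟨⟨p.dom ∪ q.dom, Set.union_subset p.dom_sub q.dom_sub,
    p.dom_countable.union q.dom_countable, p.top, p.top_lt,
    fun τ => if τ ∈ p.dom then p.fn τ else q.fn τ, ?_⟩, ?_, ?_⟩
  · intro τ hτ
    by_cases hp : τ ∈ p.dom
    · simpa [hp] using p.fn_subtree τ hp
    · have hq : τ ∈ q.dom := hτ.resolve_left hp
      have := q.fn_subtree τ hq
      rw [← htop] at this
      simpa [hp] using this
  · exact ⟨Set.subset_union_left, le_refl _, fun τ hτ x hx => by simp [hτ]⟩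
  · refine ⟨Set.subset_union_right, le_of_eq htop.symm, fun τ hτ x hx => ?_⟩
    by_cases hp : τ ∈ p.dom
    · simp only [if_pos hp]
      exact hcon τ hp hτ x (htop ▸ hx)
    · simp [hp]

-- transfer of a conflicting family along a small union
lemma transfer_family {W : Type u} {K : Type u} {V : Type u} (hVne : Nonempty V)
    (d0 : W → Set K) (hd0 : ∀ i, (d0 i).Countable) (F0 : W → K → V)
    (hU : #(⋃ i, d0 i : Set K) ≤ #W)
    (H0 : ∀ i j : W, i ≠ j → ∃ τ, τ ∈ d0 i ∧ τ ∈ d0 j ∧ F0 i τ ≠ F0 j τ) :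
    ∃ (d : W → Set W) (F : W → W → V), (∀ i, (d i).Countable) ∧
      ∀ i j : W, i ≠ j → ∃ w, w ∈ d i ∧ w ∈ d j ∧ F i w ≠ F j w := by
  classical
  obtain ⟨φ⟩ := (Cardinal.le_def _ _).1 hU
  refine ⟨fun i => φ '' {u : ↥(⋃ i, d0 i) | u.1 ∈ d0 i},
    fun i w => if h : ∃ u, φ u = w then F0 i (h.choose).1 else hVne.some, ?_, ?_⟩
  · intro i
    exact (((hd0 i).preimage Subtype.val_injective).image _)
  · intro i j hij
    obtain ⟨τ, hτi, hτj, hFne⟩ := H0 i j hij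
    have hτU : τ ∈ ⋃ i, d0 i := Set.mem_iUnion.2 ⟨i, hτi⟩
    refine ⟨φ ⟨τ, hτU⟩, ⟨⟨τ, hτU⟩, hτi, rfl⟩, ⟨⟨τ, hτU⟩, hτj, rfl⟩, ?_⟩
    have hex : ∃ u, φ u = φ ⟨τ, hτU⟩ := ⟨⟨τ, hτU⟩, rfl⟩
    have hch : hex.choose = ⟨τ, hτU⟩ := φ.injective hex.choose_spec
    simp only [dif_pos hex, hch]
    exact hFne

theorem main {α : Type} [inst : PartialOrder α] (T : OmegaOneTree α) (κ : Ordinal.{v})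
    (hCH1 : (2 : Cardinal.{1}) ^ (Cardinal.aleph0 : Cardinal.{1}) = Cardinal.aleph 1)
    (A : Set (SubtreeCond.{v} T κ))
    (hanti : ∀ p ∈ A, ∀ q ∈ A, p ≠ q → ¬ SubtreeCompatible p q) :
    Cardinal.mk ↥A < Cardinal.aleph 2 := by
  classical
  by_contra hlt
  push_neg at hlt
  have hCHv : (2 : Cardinal.{v+1}) ^ (Cardinal.aleph0 : Cardinal.{v+1}) = Cardinal.aleph 1 :=
    CH_transfer hCH1
  -- color by top
  have hC1card : #(ULift.{max 1 (v+1)} (↥(Set.Iio omega1.{0}))) ≤ Cardinal.aleph 1 := by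
    rw [Cardinal.mk_uLift, Ordinal.mk_Iio_ordinal, Cardinal.lift_lift]
    have h1 : (omega1.{0}).card = Cardinal.aleph 1 := Cardinal.card_ord _
    rw [h1, lift_aleph_one]
  set ftop : ↥A → ULift.{max 1 (v+1)} (↥(Set.Iio omega1.{0})) :=
    fun p => ⟨⟨p.1.top, p.1.top_lt⟩⟩ with hftop
  have hAuniv : ¬ #(Set.univ : Set ↥A) ≤ Cardinal.aleph 1 := by
    rw [Cardinal.mk_univ]
    intro hle
    exact absurd (hlt.trans hle) (not_le.2 (Cardinal.aleph_lt_aleph.2 one_lt_two))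
  obtain ⟨c1, hc1⟩ := fiberBig (Set.univ : Set ↥A) ftop hC1card hAuniv
  set β : Ordinal.{0} := c1.down.1 with hβdef
  have hβ : β < omega1.{0} := c1.down.2
  have hBbig : Cardinal.aleph 1 < #{p : ↥A | p ∈ Set.univ ∧ ftop p = c1} := not_le.1 hc1
  -- the index well-order W of size ℵ₂
  set W := ↥(Set.Iio ((Cardinal.aleph 2 : Cardinal.{v}).ord)) with hWdef
  have hmkW : #W = Cardinal.aleph 2 := by
    rw [hWdef, Ordinal.mk_Iio_ordinal, Cardinal.card_ord, lift_aleph_two]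
  have hemb : Nonempty (W ↪ ↥{p : ↥A | p ∈ Set.univ ∧ ftop p = c1}) := by
    rw [← Cardinal.lift_mk_le']
    rw [hmkW, lift_aleph_two, aleph_two_succ]
    apply Order.succ_le_of_lt
    calc (Cardinal.aleph 1 : Cardinal.{max (max 1 (v+1)) (v+1)}) =
        Cardinal.lift.{v+1} (Cardinal.aleph 1 : Cardinal.{max 1 (v+1)}) :=
          (lift_aleph_one).symm
      _ < Cardinal.lift.{v+1} #{p : ↥A | p ∈ Set.univ ∧ ftop p = c1} := Cardinal.lift_lt.2 hBbig
  obtain ⟨E⟩ := hemb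
  set P : W → SubtreeCond T κ := fun i => ((E i : ↥A) : SubtreeCond T κ) with hP
  have hPA : ∀ i, P i ∈ A := fun i => (E i).1.2
  have hPtop : ∀ i, (P i).top = β := by
    intro i
    have h2 : ftop (E i).1 = c1 := (E i).2.2
    exact congrArg (fun z => z.down.1) h2
  have hPinj : Function.Injective P := by
    intro i j hij
    apply E.injective
    apply Subtype.ext
    apply Subtype.ext
    exact hij
  -- the value space
  set Sβ := {x : α | T.height x ≤ β} with hSβ
  have hSβc : Sβ.Countable := level_le_countable T hβ
  have hVcard : #(ULift.{v+1} (↥Sβ → Bool)) ≤ Cardinal.aleph 1 := by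
    rw [Cardinal.mk_uLift]
    have h0 : #(↥Sβ → Bool) ≤ (2 : Cardinal.{0}) ^ (ℵ₀ : Cardinal.{0}) := by
      have he : #(↥Sβ → Bool) = (2 : Cardinal.{0}) ^ #↥Sβ := by
        rw [← Cardinal.mk_bool]
        exact (Cardinal.power_def _ _).symm
      rw [he]
      exact Cardinal.power_le_power_left (by norm_num) (mk_le_a0 hSβc)
    calc Cardinal.lift.{v+1} #(↥Sβ → Bool)
        ≤ Cardinal.lift.{v+1} ((2 : Cardinal.{0}) ^ (ℵ₀ : Cardinal.{0})) := Cardinal.lift_le.2 h0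
      _ = (2 : Cardinal.{v+1}) ^ (ℵ₀ : Cardinal.{v+1}) := by
          rw [Cardinal.lift_two_power, Cardinal.lift_aleph0]
      _ = Cardinal.aleph 1 := hCHv
  set F0 : W → Ordinal.{v} → ULift.{v+1} (↥Sβ → Bool) :=
    fun i τ => ⟨fun x => (P i).fn τ x.1⟩ with hF0
  set d0 : W → Set Ordinal.{v} := fun i => (P i).dom with hd0
  have hd0c : ∀ i, (d0 i).Countable := fun i => (P i).dom_countable
  have hH0 : ∀ i j : W, i ≠ j → ∃ τ, τ ∈ d0 i ∧ τ ∈ d0 j ∧ F0 i τ ≠ F0 j τ := by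
    intro i j hij
    have hne : P i ≠ P j := fun h => hij (hPinj h)
    have hincomp := hanti (P i) (hPA i) (P j) (hPA j) hne
    obtain ⟨τ, hτi, hτj, x, hx, hfx⟩ :=
      conflict_of_incompatible (P i) (P j) (by rw [hPtop i, hPtop j]) hincomp
    refine ⟨τ, hτi, hτj, ?_⟩
    intro hFeq
    apply hfx
    have hxS : x ∈ Sβ := by rw [hSβ]; exact Set.mem_setOf_eq ▸ (by rw [← hPtop i]; exact hx)
    exact congrArg (fun g : ULift.{v+1} (↥Sβ → Bool) => g.down ⟨x, hxS⟩) hFeq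
  have haleph02 : (ℵ₀ : Cardinal.{v+1}) ≤ #W := by rw [hmkW]; exact Cardinal.aleph0_le_aleph 2
  have hNW : Nonempty W := by
    rw [← Cardinal.mk_ne_zero_iff, hmkW]
    exact ne_of_gt (Cardinal.aleph_pos 2)
  have hUb : #(⋃ i, d0 i : Set Ordinal.{v}) ≤ #W := by
    calc #(⋃ i, d0 i : Set Ordinal.{v}) ≤ #W * ⨆ i, #(d0 i) := Cardinal.mk_iUnion_le _
      _ ≤ #W * #W := mul_le_mul' le_rfl
          ((ciSup_le' fun i => mk_le_a0 (hd0c i)).trans haleph02)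
      _ = #W := Cardinal.mul_eq_self haleph02
  obtain ⟨d, F, hdc, hH⟩ := transfer_family ⟨⟨fun _ => false⟩⟩ d0 hd0c F0 hUb hH0
  have hIic : ∀ b : W, #(Set.Iic b) ≤ Cardinal.aleph 1 := by
    intro b
    have hin : Function.Injective (fun x : ↥(Set.Iic b) =>
        (⟨x.1.1, by
          have h1 : x.1.1 ≤ b.1 := Subtype.coe_le_coe.2 x.2
          have h2 : b.1 < b.1 + 1 := by
            rw [Ordinal.add_one_eq_succ]; exact Order.lt_succ _
          exact lt_of_le_of_lt h1 h2⟩ : ↥(Set.Iio (b.1 + 1) : Set Ordinal.{v}))) := by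
      intro x y hxy
      simp only [Subtype.mk.injEq] at hxy
      have hxy' := congrArg Subtype.val hxy
      exact Subtype.ext (Subtype.ext hxy')
    have h3 : #(Set.Iic b) ≤ #(Set.Iio (b.1 + 1) : Set Ordinal.{v}) :=
      Cardinal.mk_le_of_injective hin
    rw [Ordinal.mk_Iio_ordinal] at h3
    have h4 : (b.1 + 1).card ≤ Cardinal.aleph 1 := by
      rw [Ordinal.add_one_eq_succ, Ordinal.card_succ]
      have h5 : b.1.card < Cardinal.aleph 2 := Cardinal.lt_ord.1 b.2
      have h6 : b.1.card ≤ Cardinal.aleph 1 :=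
        Order.lt_succ_iff.1 (lt_of_lt_of_eq h5 aleph_two_succ)
      calc b.1.card + 1 ≤ Cardinal.aleph 1 + 1 := add_le_add_left h6 1
        _ = Cardinal.aleph 1 := Cardinal.add_one_eq aleph0_le_aleph_one
    refine h3.trans ?_
    calc Cardinal.lift.{v+1} (b.1 + 1).card ≤ Cardinal.lift.{v+1} (Cardinal.aleph 1) :=
        Cardinal.lift_le.2 h4
      _ = Cardinal.aleph 1 := lift_aleph_one
  exact kernel (by rw [hmkW]; exact not_le.2 (Cardinal.aleph_lt_aleph.2 one_lt_two)) hIic hVcard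
    (CH_transfer hCH1) d hdc F hH

end SubtreeCC

/-- Proposition 4.22: assuming CH, the subtree forcing `ℙ` is `ω₂`-c.c.:
every antichain has cardinality less than `ℵ₂`. -/
theorem subtree_forcing_omega2_cc
    (T : OmegaOneTree α) (κ : Ordinal) (hκ : 0 < κ)
    (hCH : (2 : Cardinal.{1}) ^ (Cardinal.aleph0 : Cardinal.{1}) = Cardinal.aleph 1)
    (A : Set (SubtreeCond T κ))
    (hanti : ∀ p ∈ A, ∀ q ∈ A, p ≠ q → ¬ SubtreeCompatible p q) :
    Cardinal.mk ↥A < Cardinal.aleph 2 := by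
  exact SubtreeCC.main T κ hCH A hanti
end
end

section
/- (Key Property for automorphisms) Let α < β < ω₁. Suppose a_0,…,a_{n-1} are distinct elements of T_α and G = {g_τ : τ ∈ A} is a finite indexed family of automorphisms of T↾(β+1) such that the family of restrictions {g_τ↾(α+1) : τ ∈ A} is separated on (a_0,…,a_{n-1}). Let t ⊆ T_β be finite. Then there exist b_0,…,b_{n-1} ∈ T_β \ t such that a_i <_T b_i for all i < n and, for all τ ∈ A, (a_0,…,a_{n-1}) and (b_0,…,b_{n-1}) are g_τ-consistent. -/
noncomputable section

variable {α : Type} [PartialOrder α]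

/-- The pair `(g, g')` is an automorphism of `T↾(β+1)` together with its inverse:
both are level preserving on `T↾(β+1)`, mutually inverse there, and strictly
increasing there (hence `g` is an order isomorphism of `T↾(β+1)` onto itself). -/
def IsTreeAuto (T : OmegaOneTree α) (β : Ordinal) (g g' : α → α) : Prop :=
  (∀ x : α, T.height x ≤ β → T.height (g x) = T.height x) ∧
  (∀ x : α, T.height x ≤ β → T.height (g' x) = T.height x) ∧
  (∀ x : α, T.height x ≤ β → g' (g x) = x) ∧
  (∀ x : α, T.height x ≤ β → g (g' x) = x) ∧
  (∀ x y : α, T.height y ≤ β → x < y → g x < g y) ∧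
  (∀ x y : α, T.height y ≤ β → x < y → g' x < g' y)

/-- `(g, g')` extends `(f, f')` on `T↾(γ+1)` (i.e. `f ⊆ g` for automorphisms). -/
def AutoExtends (T : OmegaOneTree α) (γ : Ordinal) (f f' g g' : α → α) : Prop :=
  (∀ x : α, T.height x ≤ γ → g x = f x) ∧ (∀ x : α, T.height x ≤ γ → g' x = f' x)

/-- `X↾lo` and `X` are `g`-consistent: for all `x, y ∈ X`,
`g(x↾lo) = y↾lo` iff `g(x) = y`. -/
def AutoConsistentSet (T : OmegaOneTree α) (g : α → α) (lo : Ordinal) (X : Set α) : Prop :=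
  ∀ x ∈ X, ∀ y ∈ X, (g (T.restrict x lo) = T.restrict y lo ↔ g x = y)

/-- The tuples `a` and `b` (with `a = b↾lo` componentwise) are `g`-consistent:
for all `i, j`, `g(a i) = a j` iff `g(b i) = b j`. -/
def AutoConsistentPair (g : α → α) {n : ℕ} (a b : Fin n → α) : Prop :=
  ∀ i j : Fin n, (g (a i) = a j ↔ g (b i) = b j)

/-- The indexed family of automorphisms `(g, g')` is separated on the injective
tuple `a`: no member of the tuple satisfies a relation with itself, and each
member satisfies at most one relation `g_τ^m(a k) = a i` with earlier members. -/
def AutoSepTuple {ι : Type} (g g' : ι → α → α) {n : ℕ} (a : Fin n → α) : Prop :=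
  (∀ (k : Fin n) (τ : ι), g τ (a k) ≠ a k) ∧
  ∀ (k i₁ i₂ : Fin n) (m₁ m₂ : Bool) (τ₁ τ₂ : ι), i₁ < k → i₂ < k →
    cond m₁ (g τ₁ (a k)) (g' τ₁ (a k)) = a i₁ →
    cond m₂ (g τ₂ (a k)) (g' τ₂ (a k)) = a i₂ →
    i₁ = i₂ ∧ m₁ = m₂ ∧ τ₁ = τ₂

/-- The indexed family of automorphisms `(g, g')` is separated on the finite set
`X`: some injective tuple listing the elements of `X` witnesses separation. -/
def AutoSepSet {ι : Type} (g g' : ι → α → α) (X : Set α) : Prop :=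
  ∃ (n : ℕ) (a : Fin n → α), Function.Injective a ∧ Set.range a = X ∧ AutoSepTuple g g' a

/-- The indexed family of automorphisms `(g, g')` of `T↾(β+1)` is separated:
it is separated on every finite subset of the level `T_β`. -/
def AutoSeparated (T : OmegaOneTree α) (β : Ordinal) {ι : Type} (g g' : ι → α → α) : Prop :=
  ∀ X : Set α, X.Finite → (∀ x ∈ X, T.height x = β) → AutoSepSet g g' X

/-- Closure of a set under the maps `g τ`, `g' τ`, iterated `j` times. -/
def autoClosure {ι : Type} (g g' : ι → α → α) (t : Set α) : ℕ → Set α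
  | 0 => t
  | j + 1 => autoClosure g g' t j ∪
      ⋃ τ, (g τ '' autoClosure g g' t j ∪ g' τ '' autoClosure g g' t j)

lemma autoClosure_finite {ι : Type} [Finite ι] (g g' : ι → α → α) {t : Set α}
    (ht : t.Finite) : ∀ j, (autoClosure g g' t j).Finite := by
  intro j
  induction j with
  | zero => exact ht
  | succ j ih =>
    exact ih.union (Set.finite_iUnion fun τ => (ih.image _).union (ih.image _))

lemma subset_autoClosure {ι : Type} (g g' : ι → α → α) (t : Set α) :
    ∀ j, t ⊆ autoClosure g g' t j := by
  intro j
  induction j with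
  | zero => exact subset_rfl
  | succ j ih => exact ih.trans Set.subset_union_left

lemma autoClosure_mono {ι : Type} (g g' : ι → α → α) (t : Set α) {j j' : ℕ}
    (h : j ≤ j') : autoClosure g g' t j ⊆ autoClosure g g' t j' := by
  induction j' with
  | zero => simp_all
  | succ j' ih =>
    rcases Nat.lt_or_ge j (j' + 1) with h' | h'
    · exact (ih (Nat.lt_succ_iff.mp h')).trans Set.subset_union_left
    · have : j = j' + 1 := le_antisymm h h'
      subst this; exact subset_rfl

lemma g_mem_autoClosure {ι : Type} {g g' : ι → α → α} {t : Set α} {j : ℕ} {x : α}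
    (hx : x ∈ autoClosure g g' t j) (τ : ι) : g τ x ∈ autoClosure g g' t (j + 1) :=
  Set.mem_union_right _ (Set.mem_iUnion.2 ⟨τ, Set.mem_union_left _ ⟨x, hx, rfl⟩⟩)

lemma g'_mem_autoClosure {ι : Type} {g g' : ι → α → α} {t : Set α} {j : ℕ} {x : α}
    (hx : x ∈ autoClosure g g' t j) (τ : ι) : g' τ x ∈ autoClosure g g' t (j + 1) :=
  Set.mem_union_right _ (Set.mem_iUnion.2 ⟨τ, Set.mem_union_right _ ⟨x, hx, rfl⟩⟩)

/-- An automorphism of `T↾(hi+1)` commutes with restriction. -/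
lemma restrict_auto_apply (T : OmegaOneTree α) {hi lo : Ordinal} {g g' : α → α}
    (hg : IsTreeAuto T hi g g') {x y : α} (hy : T.height y ≤ hi) (hxy : x ≤ y)
    (hx : T.height x = lo) : T.restrict (g y) lo = g x := by
  obtain ⟨h1, _, _, _, h5, _⟩ := hg
  have hxhi : T.height x ≤ hi := by
    rcases lt_or_eq_of_le hxy with h | h
    · exact le_of_lt (lt_of_lt_of_le (T.height_strictMono h) hy)
    · rw [h]; exact hy
  have hgx : T.height (g x) = lo := by rw [h1 x hxhi, hx]
  have hle : g x ≤ g y := by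
    rcases lt_or_eq_of_le hxy with h | h
    · exact le_of_lt (h5 x y hy h)
    · rw [h]
  exact T.restrict_eq hle hgx

/-- Above any node there are infinitely many nodes at any given higher level. -/
lemma level_above_infinite (T : OmegaOneTree α) {x : α} {hi : Ordinal}
    (h1 : T.height x < hi) (h2 : hi < omega1) :
    {y : α | x < y ∧ T.height y = hi}.Infinite := by
  classical
  set lo := T.height x with hlo
  have hsucc : lo + 1 ≤ hi := by
    rw [Ordinal.add_one_eq_succ]
    exact Order.succ_le_of_lt h1
  have hsplit := T.splitting x
  rcases eq_or_lt_of_le hsucc with heq | hlt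
  · apply hsplit.mono
    intro y hy
    exact ⟨hy.1, by rw [hy.2, ← hlo, heq]⟩
  · set f : α → α := fun y =>
      if hy : T.height y < hi then Classical.choose (T.exists_above y hy h2) else y with hf
    have hfspec : ∀ y : α, T.height y = lo + 1 → y < f y ∧ T.height (f y) = hi := by
      intro y hy
      have hylt : T.height y < hi := by rw [hy]; exact hlt
      simp only [hf, dif_pos hylt]
      exact Classical.choose_spec (T.exists_above y hylt h2)
    have himg : f '' {y : α | x < y ∧ T.height y = lo + 1} ⊆
        {y : α | x < y ∧ T.height y = hi} := by
      rintro _ ⟨y, hy, rfl⟩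
      obtain ⟨h3, h4⟩ := hfspec y hy.2
      exact ⟨lt_trans hy.1 h3, h4⟩
    have hinj : Set.InjOn f {y : α | x < y ∧ T.height y = lo + 1} := by
      intro y1 hy1 y2 hy2 heq
      have e1 : T.restrict (f y1) (lo + 1) = y1 :=
        T.restrict_eq (le_of_lt (hfspec y1 hy1.2).1) hy1.2
      have e2 : T.restrict (f y2) (lo + 1) = y2 :=
        T.restrict_eq (le_of_lt (hfspec y2 hy2.2).1) hy2.2
      rw [← e1, ← e2, heq]
    exact Set.Infinite.mono himg (hsplit.image hinj)

/-- Proposition 5.11 (Key Property for automorphisms). -/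
theorem auto_key_property
    (T : OmegaOneTree α)
    (lo hi : Ordinal) (hlohi : lo < hi) (hhi : hi < omega1)
    (n : ℕ) (a : Fin n → α) (hainj : Function.Injective a)
    (halev : ∀ i, T.height (a i) = lo)
    {ι : Type} [Finite ι] (g g' : ι → α → α)
    (hg : ∀ τ, IsTreeAuto T hi (g τ) (g' τ))
    (hsep : AutoSepTuple g g' a)
    (t : Set α) (htfin : t.Finite) (htlev : ∀ x ∈ t, T.height x = hi) :
    ∃ b : Fin n → α,
      (∀ i, T.height (b i) = hi ∧ b i ∉ t ∧ a i < b i) ∧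
      ∀ τ : ι, AutoConsistentPair (g τ) a b := by
  classical
  set F : ℕ → Set α := autoClosure g g' t with hF
  have hFfin : ∀ j, (F j).Finite := autoClosure_finite g g' htfin
  have hlole : lo ≤ hi := le_of_lt hlohi
  have hahi : ∀ i, T.height (a i) ≤ hi := fun i => (halev i).le.trans hlole
  -- main construction by induction on k
  have main : ∀ k : ℕ, k ≤ n → ∃ b : Fin n → α,
      (∀ i : Fin n, (i : ℕ) < k →
        T.height (b i) = hi ∧ b i ∉ F (n - 1 - i) ∧ a i < b i) ∧
      (∀ i j : Fin n, (i : ℕ) < k → (j : ℕ) < k → ∀ τ,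
        g τ (a i) = a j → g τ (b i) = b j) := by
    intro k
    induction k with
    | zero =>
      intro _
      exact ⟨a, fun i hi => absurd hi (Nat.not_lt_zero _),
        fun i j hi _ _ _ => absurd hi (Nat.not_lt_zero _)⟩
    | succ k ih =>
      intro hk1
      have hk : k < n := hk1
      obtain ⟨b, hb1, hb2⟩ := ih (le_of_lt hk)
      set K : Fin n := ⟨k, hk⟩ with hK
      -- choose the new value x for index K
      have hx : ∃ x : α, (T.height x = hi ∧ x ∉ F (n - 1 - k) ∧ a K < x) ∧
          (∀ (i : Fin n) (τ : ι), (i : ℕ) < k → g τ (a i) = a K → g τ (b i) = x) ∧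
          (∀ (j : Fin n) (τ : ι), (j : ℕ) < k → g τ (a K) = a j → g τ x = b j) := by
        by_cases h : ∃ (i : Fin n) (m : Bool) (τ : ι), (i : ℕ) < k ∧
            cond m (g τ (a K)) (g' τ (a K)) = a i
        · -- forced case
          obtain ⟨i₀, m₀, τ₀, hi₀k, heq₀⟩ := h
          obtain ⟨hbh, hbF, hab⟩ := hb1 i₀ hi₀k
          have hbhi : T.height (b i₀) ≤ hi := hbh.le
          refine ⟨cond m₀ (g' τ₀ (b i₀)) (g τ₀ (b i₀)), ⟨?_, ?_, ?_⟩, ?_, ?_⟩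
          · cases m₀ <;> simp only [cond] <;>
              [rw [(hg τ₀).1 _ hbhi, hbh]; rw [(hg τ₀).2.1 _ hbhi, hbh]]
          · -- not in F (n-1-k)
            intro hmem
            apply hbF
            have hsub : F (n - 1 - k + 1) ⊆ F (n - 1 - (i₀ : ℕ)) := by
              apply autoClosure_mono
              omega
            cases m₀ with
            | false =>
              simp only [cond] at hmem
              have := g'_mem_autoClosure hmem τ₀
              rw [(hg τ₀).2.2.1 _ hbhi] at this
              exact hsub this
            | true =>
              simp only [cond] at hmem
              have := g_mem_autoClosure hmem τ₀
              rw [(hg τ₀).2.2.2.1 _ hbhi] at this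
              exact hsub this
          · -- a K < x
            cases m₀ with
            | false =>
              simp only [cond] at heq₀ ⊢
              have : g τ₀ (a i₀) = a K := by
                rw [← heq₀, (hg τ₀).2.2.2.1 _ (hahi K)]
              rw [← this]
              exact (hg τ₀).2.2.2.2.1 _ _ hbhi hab
            | true =>
              simp only [cond] at heq₀ ⊢
              have : g' τ₀ (a i₀) = a K := by
                rw [← heq₀, (hg τ₀).2.2.1 _ (hahi K)]
              rw [← this]
              exact (hg τ₀).2.2.2.2.2 _ _ hbhi hab
          · -- relations (i, K)
            intro i τ hik heq
            have htrip : cond false (g τ (a K)) (g' τ (a K)) = a i := by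
              simp only [cond]
              rw [← heq, (hg τ).2.2.1 _ (hahi i)]
            obtain ⟨hii, hmm, hττ⟩ := hsep.2 K i i₀ false m₀ τ τ₀
              (show i < K from hik) (show i₀ < K from hi₀k) htrip heq₀
            subst hii; subst hττ
            cases hmm
            rfl
          · -- relations (K, j)
            intro j τ hjk heq
            have htrip : cond true (g τ (a K)) (g' τ (a K)) = a j := heq
            obtain ⟨hjj, hmm, hττ⟩ := hsep.2 K j i₀ true m₀ τ τ₀
              (show j < K from hjk) (show i₀ < K from hi₀k) htrip heq₀
            subst hjj; subst hττ
            cases hmm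
            simp only [cond]
            exact (hg τ).2.2.2.1 _ hbhi
        · -- free case
          push_neg at h
          have hinf := level_above_infinite T (x := a K)
            (by rw [halev K]; exact hlohi) hhi
          obtain ⟨x, hx1, hx2⟩ := (hinf.diff (hFfin (n - 1 - k))).nonempty
          refine ⟨x, ⟨hx1.2, hx2, hx1.1⟩, ?_, ?_⟩
          · intro i τ hik heq
            exfalso
            have : cond false (g τ (a K)) (g' τ (a K)) = a i := by
              simp only [cond]
              rw [← heq, (hg τ).2.2.1 _ (hahi i)]
            exact h i false τ hik this
          · intro j τ hjk heq
            exact absurd (show cond true (g τ (a K)) (g' τ (a K)) = a j from heq)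
              (h j true τ hjk)
      obtain ⟨x, hxprop, hxrel1, hxrel2⟩ := hx
      refine ⟨Function.update b K x, ?_, ?_⟩
      · intro i hik
        rcases Nat.lt_or_ge (i : ℕ) k with h' | h'
        · have hne : i ≠ K := by
            intro he; rw [he] at h'; exact absurd h' (lt_irrefl _)
          rw [Function.update_of_ne hne]
          exact hb1 i h'
        · have hie : i = K := Fin.ext (show _ = k by omega)
          subst hie
          rw [Function.update_self]
          exact ⟨hxprop.1, hxprop.2.1, hxprop.2.2⟩
      · intro i j hik hjk τ heq
        rcases Nat.lt_or_ge (i : ℕ) k with hi' | hi' <;>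
          rcases Nat.lt_or_ge (j : ℕ) k with hj' | hj'
        · have hni : i ≠ K := fun he => by rw [he] at hi'; exact absurd hi' (lt_irrefl _)
          have hnj : j ≠ K := fun he => by rw [he] at hj'; exact absurd hj' (lt_irrefl _)
          rw [Function.update_of_ne hni, Function.update_of_ne hnj]
          exact hb2 i j hi' hj' τ heq
        · have hni : i ≠ K := fun he => by rw [he] at hi'; exact absurd hi' (lt_irrefl _)
          have hje : j = K := Fin.ext (show _ = k by omega)
          subst hje
          rw [Function.update_of_ne hni, Function.update_self]
          exact hxrel1 i τ hi' heq
        · have hie : i = K := Fin.ext (show _ = k by omega)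
          have hnj : j ≠ K := fun he => by rw [he] at hj'; exact absurd hj' (lt_irrefl _)
          subst hie
          rw [Function.update_of_ne hnj, Function.update_self]
          exact hxrel2 j τ hj' heq
        · have hie : i = K := Fin.ext (show _ = k by omega)
          have hje : j = K := Fin.ext (show _ = k by omega)
          rw [hie, hje] at heq
          exact absurd heq (hsep.1 K τ)
  obtain ⟨b, hb1, hb2⟩ := main n le_rfl
  have hblev : ∀ i, T.height (b i) = hi := fun i => (hb1 i i.isLt).1
  have hbab : ∀ i, a i < b i := fun i => (hb1 i i.isLt).2.2
  refine ⟨b, fun i => ⟨hblev i, fun hmem =>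
    (hb1 i i.isLt).2.1 (subset_autoClosure g g' t _ hmem), hbab i⟩, ?_⟩
  intro τ i j
  constructor
  · exact fun heq => hb2 i j i.isLt j.isLt τ heq
  · intro heq
    have e1 : T.restrict (g τ (b i)) lo = g τ (a i) :=
      restrict_auto_apply T (hg τ) (hblev i).le (le_of_lt (hbab i)) (halev i)
    have e2 : T.restrict (b j) lo = a j :=
      T.restrict_eq (le_of_lt (hbab j)) (halev j)
    rw [← e1, heq, e2]
end
end

section
/- (1-Key Property for automorphisms) Let α < β < ω₁. Suppose a_0,…,a_{n-1} are distinct elements of T_α and G = {g_τ : τ ∈ A} is a finite indexed family of automorphisms of T↾(β+1) such that the family of restrictions {g_τ↾(α+1) : τ ∈ A} is separated on (a_0,…,a_{n-1}). Let n̄ < n and fix b ∈ T_β with a_{n̄} <_T b. Then there exist b_0,…,b_{n-1} ∈ T_β such that a_i <_T b_i for all i < n, b_{n̄} = b, and for all τ ∈ A, (a_0,…,a_{n-1}) and (b_0,…,b_{n-1}) are g_τ-consistent. -/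
noncomputable section

variable {α : Type} [PartialOrder α]

namespace OneKeyAux

set_option linter.unusedSectionVars false

variable {n : ℕ} {ι : Type}

def KRel (a : Fin n → α) (g g' : ι → α → α) (i k : Fin n) (m : Bool) (τ : ι) : Prop :=
  cond m (g τ (a k)) (g' τ (a k)) = a i

noncomputable def KParent (a : Fin n → α) (g g' : ι → α → α) (k : Fin n) :
    Option (Fin n × Bool × ι) :=
  @dite _ (∃ p : Fin n × Bool × ι, p.1 < k ∧ KRel a g g' p.1 k p.2.1 p.2.2)
    (Classical.dec _) (fun h => some h.choose) (fun _ => none)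

lemma KParent_spec {a : Fin n → α} {g g' : ι → α → α} {k : Fin n} {p}
    (h : KParent a g g' k = some p) : p.1 < k ∧ KRel a g g' p.1 k p.2.1 p.2.2 := by
  unfold KParent at h
  split at h
  · next hex =>
    have := hex.choose_spec
    rwa [Option.some.inj h] at this
  · exact absurd h (by simp)

lemma KParent_eq_some {a : Fin n → α} {g g' : ι → α → α}
    (hsep : AutoSepTuple g g' a) {i k : Fin n} {m : Bool} {τ : ι}
    (hik : i < k) (hrel : KRel a g g' i k m τ) :
    KParent a g g' k = some (i, m, τ) := by
  have hex : ∃ p : Fin n × Bool × ι, p.1 < k ∧ KRel a g g' p.1 k p.2.1 p.2.2 :=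
    ⟨(i, m, τ), hik, hrel⟩
  unfold KParent
  rw [dif_pos hex]
  obtain ⟨h1, h2⟩ := hex.choose_spec
  obtain ⟨e1, e2, e3⟩ := hsep.2 k hex.choose.1 i hex.choose.2.1 m hex.choose.2.2 τ h1 hik h2 hrel
  congr 1
  exact Prod.ext e1 (Prod.ext e2 e3)

def KStep (g g' : ι → α → α) (x : α) (p : Fin n × Bool × ι) : α :=
  cond p.2.1 (g p.2.2 x) (g' p.2.2 x)

noncomputable def KChain (a : Fin n → α) (g g' : ι → α → α) (nbar : Fin n) (b : α) :
    ℕ → Option (Fin n × α)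
  | 0 => some (nbar, b)
  | j+1 => (KChain a g g' nbar b j).bind fun kx =>
      (KParent a g g' kx.1).map fun p => (p.1, KStep g g' kx.2 p)

lemma KChain_succ_some {a : Fin n → α} {g g' : ι → α → α} {nbar : Fin n} {b : α}
    {j : ℕ} {iy : Fin n × α} (h : KChain a g g' nbar b (j+1) = some iy) :
    ∃ kx p, KChain a g g' nbar b j = some kx ∧ KParent a g g' kx.1 = some p ∧
      iy = (p.1, KStep g g' kx.2 p) := by
  cases hc : KChain a g g' nbar b j with
  | none => rw [KChain, hc] at h; simp at h
  | some kx =>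
    cases hp : KParent a g g' kx.1 with
    | none => rw [KChain, hc] at h; simp [hp] at h
    | some p =>
      refine ⟨kx, p, rfl, hp, ?_⟩
      rw [KChain, hc] at h
      simp [hp] at h
      exact h.symm

lemma KChain_lt {a : Fin n → α} {g g' : ι → α → α} {nbar : Fin n} {b : α}
    {j : ℕ} {kx : Fin n × α} (h1 : KChain a g g' nbar b j = some kx) :
    ∀ d : ℕ, ∀ k'x' : Fin n × α, KChain a g g' nbar b (j+1+d) = some k'x' → k'x'.1 < kx.1 := by
  intro d
  induction d with
  | zero =>
    intro k'x' h2
    obtain ⟨kx0, p, hc, hp, he⟩ := KChain_succ_some h2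
    rw [h1] at hc
    obtain rfl := Option.some.inj hc
    rw [he]
    exact (KParent_spec hp).1
  | succ d ih =>
    intro k'x' h2
    obtain ⟨kx0, p, hc, hp, he⟩ := KChain_succ_some (j := j+1+d) h2
    have h3 := ih kx0 hc
    rw [he]
    exact lt_trans (KParent_spec hp).1 h3

lemma KChain_inj {a : Fin n → α} {g g' : ι → α → α} {nbar : Fin n} {b : α}
    {j j' : ℕ} {k : Fin n} {x x' : α}
    (h1 : KChain a g g' nbar b j = some (k, x))
    (h2 : KChain a g g' nbar b j' = some (k, x')) : j = j' ∧ x = x' := by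
  rcases Nat.lt_trichotomy j j' with hlt | heq | hgt
  · have he : j + 1 + (j' - j - 1) = j' := by omega
    have := KChain_lt h1 (j' - j - 1) (k, x') (by rw [he]; exact h2)
    exact absurd this (lt_irrefl _)
  · subst heq
    rw [h1] at h2
    exact ⟨rfl, (Prod.ext_iff.mp (Option.some.inj h2)).2⟩
  · have he : j' + 1 + (j - j' - 1) = j := by omega
    have := KChain_lt h2 (j - j' - 1) (k, x) (by rw [he]; exact h1)
    exact absurd this (lt_irrefl _)

noncomputable def KChainVal (a : Fin n → α) (g g' : ι → α → α) (nbar : Fin n) (b : α)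
    (k : Fin n) : Option α :=
  @dite _ (∃ jx : ℕ × α, KChain a g g' nbar b jx.1 = some (k, jx.2))
    (Classical.dec _) (fun h => some h.choose.2) (fun _ => none)

lemma KChainVal_of_chain {a : Fin n → α} {g g' : ι → α → α} {nbar : Fin n} {b : α}
    {j : ℕ} {k : Fin n} {x : α} (h : KChain a g g' nbar b j = some (k, x)) :
    KChainVal a g g' nbar b k = some x := by
  have hex : ∃ jx : ℕ × α, KChain a g g' nbar b jx.1 = some (k, jx.2) := ⟨(j, x), h⟩
  unfold KChainVal
  rw [dif_pos hex]
  have := hex.choose_spec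
  exact congrArg some (KChain_inj this h).2

lemma KChainVal_some {a : Fin n → α} {g g' : ι → α → α} {nbar : Fin n} {b : α}
    {k : Fin n} {x : α} (h : KChainVal a g g' nbar b k = some x) :
    ∃ j, KChain a g g' nbar b j = some (k, x) := by
  unfold KChainVal at h
  split at h
  · next hex =>
    refine ⟨hex.choose.1, ?_⟩
    rw [← Option.some.inj h]
    exact hex.choose_spec
  · exact absurd h (by simp)

noncomputable def KBB (T : OmegaOneTree α) (hi : Ordinal) (a : Fin n → α)
    (g g' : ι → α → α) (nbar : Fin n) (b : α) (k : ℕ) : α :=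
  if hk : k < n then
    match KChainVal a g g' nbar b ⟨k, hk⟩ with
    | some x => x
    | none =>
      match KParent a g g' ⟨k, hk⟩ with
      | some p =>
        if hp : (p.1 : ℕ) < k then
          cond p.2.1 (g' p.2.2 (KBB T hi a g g' nbar b (p.1 : ℕ)))
            (g p.2.2 (KBB T hi a g g' nbar b (p.1 : ℕ)))
        else b
      | none =>
        @dite _ (∃ y, a ⟨k, hk⟩ < y ∧ T.height y = hi) (Classical.dec _)
          (fun h => h.choose) (fun _ => b)
  else b
  termination_by k
  decreasing_by exact hp

lemma KBB_of_chainVal {T : OmegaOneTree α} {hi : Ordinal} {a : Fin n → α}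
    {g g' : ι → α → α} {nbar : Fin n} {b : α} {k : ℕ} (hk : k < n) {x : α}
    (h : KChainVal a g g' nbar b ⟨k, hk⟩ = some x) :
    KBB T hi a g g' nbar b k = x := by
  rw [KBB, dif_pos hk, h]

lemma KBB_of_parent {T : OmegaOneTree α} {hi : Ordinal} {a : Fin n → α}
    {g g' : ι → α → α} {nbar : Fin n} {b : α} {k : ℕ} (hk : k < n)
    (h : KChainVal a g g' nbar b ⟨k, hk⟩ = none) {p}
    (hp : KParent a g g' ⟨k, hk⟩ = some p) :
    KBB T hi a g g' nbar b k =
      cond p.2.1 (g' p.2.2 (KBB T hi a g g' nbar b (p.1 : ℕ)))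
        (g p.2.2 (KBB T hi a g g' nbar b (p.1 : ℕ))) := by
  have hlt : (p.1 : ℕ) < k := (KParent_spec hp).1
  rw [KBB, dif_pos hk, h]
  simp [hp, hlt]

lemma KBB_of_root {T : OmegaOneTree α} {hi : Ordinal} {a : Fin n → α}
    {g g' : ι → α → α} {nbar : Fin n} {b : α} {k : ℕ} (hk : k < n)
    (h : KChainVal a g g' nbar b ⟨k, hk⟩ = none)
    (hp : KParent a g g' ⟨k, hk⟩ = none)
    (hex : ∃ y, a ⟨k, hk⟩ < y ∧ T.height y = hi) :
    a ⟨k, hk⟩ < KBB T hi a g g' nbar b k ∧ T.height (KBB T hi a g g' nbar b k) = hi := by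
  rw [KBB, dif_pos hk, h]
  simp only [hp]
  rw [dif_pos hex]
  exact hex.choose_spec

end OneKeyAux


/-- Proposition 5.12 (1-Key Property for automorphisms). -/
theorem auto_one_key_property
    (T : OmegaOneTree α)
    (lo hi : Ordinal) (hlohi : lo < hi) (hhi : hi < omega1)
    (n : ℕ) (a : Fin n → α) (hainj : Function.Injective a)
    (halev : ∀ i, T.height (a i) = lo)
    {ι : Type} [Finite ι] (g g' : ι → α → α)
    (hg : ∀ τ, IsTreeAuto T hi (g τ) (g' τ))
    (hsep : AutoSepTuple g g' a)
    (nbar : Fin n) (b : α) (hb : T.height b = hi) (hab : a nbar < b) :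
    ∃ bb : Fin n → α,
      (∀ i, T.height (bb i) = hi ∧ a i < bb i) ∧
      bb nbar = b ∧
      ∀ τ : ι, AutoConsistentPair (g τ) a bb := by
  classical
  have hlole : lo ≤ hi := le_of_lt hlohi
  have hha : ∀ i : Fin n, T.height (a i) ≤ hi := fun i => by rw [halev]; exact hlole
  -- invariant along the chain from nbar
  have hchain : ∀ j (k : Fin n) (x : α), OneKeyAux.KChain a g g' nbar b j = some (k, x) →
      T.height x = hi ∧ a k < x := by
    intro j
    induction j with
    | zero =>
      intro k x h
      rw [OneKeyAux.KChain] at h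
      simp only [Option.some.injEq, Prod.mk.injEq] at h
      obtain ⟨rfl, rfl⟩ := h
      exact ⟨hb, hab⟩
    | succ j ih =>
      intro k x h
      obtain ⟨kx, p, hc, hp, he⟩ := OneKeyAux.KChain_succ_some h
      obtain ⟨hpl, hrel⟩ := OneKeyAux.KParent_spec hp
      obtain ⟨ihh, iha⟩ := ih kx.1 kx.2 (by rw [hc])
      simp only [Prod.mk.injEq] at he
      obtain ⟨rfl, rfl⟩ := he
      unfold OneKeyAux.KRel at hrel
      unfold OneKeyAux.KStep
      rcases hg p.2.2 with ⟨hg1, hg2, hg3, hg4, hg5, hg6⟩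
      cases hm : p.2.1 with
      | false =>
        simp only [hm, Bool.cond_false] at hrel ⊢
        refine ⟨by rw [hg2 _ (le_of_eq ihh), ihh], ?_⟩
        rw [← hrel]
        exact hg6 _ _ (le_of_eq ihh) iha
      | true =>
        simp only [hm, Bool.cond_true] at hrel ⊢
        refine ⟨by rw [hg1 _ (le_of_eq ihh), ihh], ?_⟩
        rw [← hrel]
        exact hg5 _ _ (le_of_eq ihh) iha
  -- heights and strict bounds for the constructed values
  have hQ : ∀ k : ℕ, ∀ hk : k < n, T.height (OneKeyAux.KBB T hi a g g' nbar b k) = hi ∧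
      a ⟨k, hk⟩ < OneKeyAux.KBB T hi a g g' nbar b k := by
    intro k
    induction k using Nat.strong_induction_on with
    | _ k ih =>
      intro hk
      cases hcv : OneKeyAux.KChainVal a g g' nbar b ⟨k, hk⟩ with
      | some x =>
        rw [OneKeyAux.KBB_of_chainVal hk hcv]
        obtain ⟨j, hj⟩ := OneKeyAux.KChainVal_some hcv
        exact hchain j _ _ hj
      | none =>
        cases hp : OneKeyAux.KParent a g g' ⟨k, hk⟩ with
        | some p =>
          rw [OneKeyAux.KBB_of_parent hk hcv hp]
          obtain ⟨hpl, hrel⟩ := OneKeyAux.KParent_spec hp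
          obtain ⟨ih1, ih2⟩ := ih (p.1 : ℕ) hpl p.1.isLt
          simp only [Fin.eta] at ih2
          unfold OneKeyAux.KRel at hrel
          rcases hg p.2.2 with ⟨hg1, hg2, hg3, hg4, hg5, hg6⟩
          cases hm : p.2.1 with
          | false =>
            simp only [hm, Bool.cond_false] at hrel ⊢
            refine ⟨by rw [hg1 _ (le_of_eq ih1), ih1], ?_⟩
            have hak : a ⟨k, hk⟩ = g p.2.2 (a p.1) := by
              rw [← hrel, hg4 _ (hha _)]
            rw [hak]
            exact hg5 _ _ (le_of_eq ih1) ih2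
          | true =>
            simp only [hm, Bool.cond_true] at hrel ⊢
            refine ⟨by rw [hg2 _ (le_of_eq ih1), ih1], ?_⟩
            have hak : a ⟨k, hk⟩ = g' p.2.2 (a p.1) := by
              rw [← hrel, hg3 _ (hha _)]
            rw [hak]
            exact hg6 _ _ (le_of_eq ih1) ih2
        | none =>
          have hex := T.exists_above (a ⟨k, hk⟩) (by rw [halev]; exact hlohi) hhi
          obtain ⟨h1, h2⟩ := OneKeyAux.KBB_of_root hk hcv hp hex
          exact ⟨h2, h1⟩
  set B : Fin n → α := fun k => OneKeyAux.KBB T hi a g g' nbar b (k : ℕ) with hB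
  have hQ' : ∀ i : Fin n, T.height (B i) = hi ∧ a i < B i := by
    intro i
    have := hQ (i : ℕ) i.isLt
    simpa only [Fin.eta, hB] using this
  -- edge lemma: realized relations transfer to B
  have hedge : ∀ (k i : Fin n) (m : Bool) (τ : ι), i < k →
      cond m (g τ (a k)) (g' τ (a k)) = a i →
      cond m (g τ (B k)) (g' τ (B k)) = B i := by
    intro k i m τ hik hrel
    have hP : OneKeyAux.KParent a g g' k = some (i, m, τ) :=
      OneKeyAux.KParent_eq_some hsep hik hrel
    cases hcv : OneKeyAux.KChainVal a g g' nbar b k with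
    | some x =>
      obtain ⟨j, hj⟩ := OneKeyAux.KChainVal_some hcv
      have hbbk : B k = x := by
        have := OneKeyAux.KBB_of_chainVal (T := T) (hi := hi) (k := (k : ℕ)) k.isLt
          (by rw [Fin.eta]; exact hcv)
        simpa only [hB] using this
      have hnext : OneKeyAux.KChain a g g' nbar b (j + 1) =
          some (i, OneKeyAux.KStep g g' x (i, m, τ)) := by
        rw [OneKeyAux.KChain, hj]
        simp [hP]
      have hcvi := OneKeyAux.KChainVal_of_chain hnext
      have hbbi : B i = OneKeyAux.KStep g g' x (i, m, τ) := by
        have := OneKeyAux.KBB_of_chainVal (T := T) (hi := hi) (k := (i : ℕ)) i.isLt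
          (by rw [Fin.eta]; exact hcvi)
        simpa only [hB] using this
      rw [hbbk, hbbi]
      rfl
    | none =>
      have hbbk : B k = cond m (g' τ (B i)) (g τ (B i)) := by
        have := OneKeyAux.KBB_of_parent (T := T) (hi := hi) (k := (k : ℕ)) k.isLt
          (h := by rw [Fin.eta]; exact hcv) (p := (i, m, τ)) (by rw [Fin.eta]; exact hP)
        simpa only [hB] using this
      have hhBi : T.height (B i) ≤ hi := le_of_eq (hQ' i).1
      rcases hg τ with ⟨hg1, hg2, hg3, hg4, hg5, hg6⟩
      rw [hbbk]
      cases m with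
      | false =>
        simp only [Bool.cond_false]
        exact hg3 _ hhBi
      | true =>
        simp only [Bool.cond_true]
        exact hg4 _ hhBi
  refine ⟨B, hQ', ?_, ?_⟩
  · -- B nbar = b
    have h0 : OneKeyAux.KChain a g g' nbar b 0 = some (nbar, b) := rfl
    have hcv := OneKeyAux.KChainVal_of_chain h0
    have := OneKeyAux.KBB_of_chainVal (T := T) (hi := hi) (k := (nbar : ℕ)) nbar.isLt
      (by rw [Fin.eta]; exact hcv)
    simpa only [hB] using this
  · intro τ i j
    constructor
    · intro hrel
      rcases lt_trichotomy i j with hij | hij | hij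
      · -- i < j : use the inverse relation at j
        have hinv : g' τ (a j) = a i := by
          rw [← hrel, (hg τ).2.2.1 _ (hha i)]
        have := hedge j i false τ hij (by simpa only [Bool.cond_false] using hinv)
        simp only [Bool.cond_false] at this
        rw [← this, (hg τ).2.2.2.1 _ (le_of_eq (hQ' j).1)]
      · exact absurd (hij ▸ hrel) (hsep.1 i τ)
      · have := hedge i j true τ hij (by simpa only [Bool.cond_true] using hrel)
        simpa only [Bool.cond_true] using this
    · intro hrel
      have h1 : g τ (a i) < B j := by
        rw [← hrel]
        exact (hg τ).2.2.2.2.1 _ _ (le_of_eq (hQ' i).1) (hQ' i).2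
      have h2 : T.height (g τ (a i)) = lo := by
        rw [(hg τ).1 _ (hha i), halev]
      have e1 := T.restrict_eq (le_of_lt h1) h2
      have e2 := T.restrict_eq (le_of_lt (hQ' j).2) (halev j)
      exact e1.symm.trans e2
end
end

section
/- Let γ < ω₁ and let {f_τ : τ ∈ I} be a countable indexed family of automorphisms of T↾(γ+1). Then there exists an indexed family {g_τ : τ ∈ I} of automorphisms of T↾(γ+2) such that: (1) f_τ ⊆ g_τ for all τ ∈ I; and (2) for all distinct τ₀, τ₁ ∈ I and all x ∈ T_{γ+1}, g_{τ₀}(x) ≠ g_{τ₁}(x). -/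
noncomputable section

variable {α : Type} [PartialOrder α]

namespace AutoAux

variable {α : Type} [PartialOrder α]

/-- The set of immediate successors of `u`. -/
def succSet (T : OmegaOneTree α) (u : α) : Set α :=
  {y : α | u < y ∧ T.height y = T.height u + 1}

lemma lt_add_one_ord (γ : Ordinal) : γ < γ + 1 := by
  rw [Ordinal.add_one_eq_succ]; exact Order.lt_succ γ

lemma le_succ_cases {β γ : Ordinal} (h : β ≤ γ + 1) : β ≤ γ ∨ β = γ + 1 := by
  rcases lt_or_eq_of_le h with h | h
  · left; rwa [Ordinal.add_one_eq_succ, Order.lt_succ_iff] at h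
  · right; exact h

lemma mem_succSet_restrict (T : OmegaOneTree α) (γ : Ordinal) (x : α)
    (h2 : T.height x = γ + 1) : x ∈ succSet T (T.restrict x γ) := by
  have hle : γ ≤ T.height x := by rw [h2]; exact le_self_add
  have hres : T.restrict x γ ≤ x := T.restrict_le x hle
  have hh : T.height (T.restrict x γ) = γ := T.height_restrict x hle
  refine ⟨lt_of_le_of_ne hres fun h => ?_, by rw [hh, h2]⟩
  rw [h, h2] at hh
  exact absurd hh (ne_of_gt (lt_add_one_ord γ))

open Classical in
/-- Extension of the automorphism `F` of `T↾(γ+1)` to `T↾(γ+2)`, shifting the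
`E`-coordinates of immediate successors by `d`. -/
noncomputable def extendAuto (T : OmegaOneTree α) (γ : Ordinal)
    (E : ∀ u : α, succSet T u ≃ ℤ) (F : α → α) (d : ℤ) (x : α) : α :=
  if T.height x ≤ γ then F x
  else if h2 : T.height x = γ + 1 then
    ((E (F (T.restrict x γ))).symm (E (T.restrict x γ) ⟨x, mem_succSet_restrict T γ x h2⟩ + d) : α)
  else x

variable (T : OmegaOneTree α) (γ : Ordinal) (E : ∀ u : α, succSet T u ≃ ℤ)
  (F : α → α) (d : ℤ)

lemma extendAuto_low {x : α} (hx : T.height x ≤ γ) : extendAuto T γ E F d x = F x := by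
  unfold extendAuto
  rw [if_pos hx]

lemma extendAuto_top {x : α} (h2 : T.height x = γ + 1) :
    extendAuto T γ E F d x =
      ((E (F (T.restrict x γ))).symm
        (E (T.restrict x γ) ⟨x, mem_succSet_restrict T γ x h2⟩ + d) : α) := by
  have hns : ¬ T.height x ≤ γ := by rw [h2]; exact not_le.mpr (lt_add_one_ord γ)
  unfold extendAuto
  rw [if_neg hns, dif_pos h2]

lemma extendAuto_top' {v x : α} (hv : T.height v = γ) (hx : x ∈ succSet T v) :
    extendAuto T γ E F d x = ((E (F v)).symm (E v ⟨x, hx⟩ + d) : α) := by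
  have h2 : T.height x = γ + 1 := by rw [hx.2, hv]
  have hres : T.restrict x γ = v := T.restrict_eq hx.1.le hv
  subst hres
  exact extendAuto_top T γ E F d h2

lemma extendAuto_mem {v x : α} (hv : T.height v = γ) (hx : x ∈ succSet T v) :
    extendAuto T γ E F d x ∈ succSet T (F v) := by
  rw [extendAuto_top' T γ E F d hv hx]
  exact ((E (F v)).symm (E v ⟨x, hx⟩ + d)).2

variable (hF : ∀ u : α, T.height u ≤ γ → T.height (F u) = T.height u)

include hF in
lemma height_extendAuto {x : α} (hx : T.height x ≤ γ + 1) :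
    T.height (extendAuto T γ E F d x) = T.height x := by
  rcases le_succ_cases hx with hlo | htop
  · rw [extendAuto_low T γ E F d hlo]
    exact hF x hlo
  · have hle : γ ≤ T.height x := by rw [htop]; exact le_self_add
    have hu : T.height (T.restrict x γ) = γ := T.height_restrict x hle
    have hFu : T.height (F (T.restrict x γ)) = γ := by rw [hF _ hu.le, hu]
    have hm := extendAuto_mem T γ E F d hu (mem_succSet_restrict T γ x htop)
    rw [hm.2, hFu, htop]

include hF in
lemma extendAuto_inverse (F' : α → α)
    (hFF' : ∀ u : α, T.height u ≤ γ → F' (F u) = u)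
    {x : α} (hx : T.height x ≤ γ + 1) :
    extendAuto T γ E F' (-d) (extendAuto T γ E F d x) = x := by
  rcases le_succ_cases hx with hlo | htop
  · rw [extendAuto_low T γ E F d hlo]
    have hFx : T.height (F x) ≤ γ := by rw [hF x hlo]; exact hlo
    rw [extendAuto_low T γ E F' (-d) hFx, hFF' x hlo]
  · have hle : γ ≤ T.height x := by rw [htop]; exact le_self_add
    have hu : T.height (T.restrict x γ) = γ := T.height_restrict x hle
    have hFu : T.height (F (T.restrict x γ)) = γ := by rw [hF _ hu.le, hu]
    have hxmem : x ∈ succSet T (T.restrict x γ) := mem_succSet_restrict T γ x htop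
    set w : succSet T (F (T.restrict x γ)) :=
      (E (F (T.restrict x γ))).symm (E (T.restrict x γ) ⟨x, hxmem⟩ + d) with hw
    have h1 : extendAuto T γ E F d x = ↑w := extendAuto_top' T γ E F d hu hxmem
    have h2 : extendAuto T γ E F' (-d) (↑w : α) =
        ((E (F' (F (T.restrict x γ)))).symm
          (E (F (T.restrict x γ)) ⟨(↑w : α), w.2⟩ + (-d)) : α) :=
      extendAuto_top' T γ E F' (-d) hFu w.2
    rw [h1, h2, Subtype.coe_eta, hw, Equiv.apply_symm_apply, add_neg_cancel_right,
      hFF' _ hu.le, Equiv.symm_apply_apply]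

include hF in
lemma extendAuto_strictMono
    (hmono : ∀ x y : α, T.height y ≤ γ → x < y → F x < F y)
    {x y : α} (hy : T.height y ≤ γ + 1) (hxy : x < y) :
    extendAuto T γ E F d x < extendAuto T γ E F d y := by
  rcases le_succ_cases hy with hlo | htop
  · have hx : T.height x ≤ γ := le_trans (T.height_strictMono hxy).le hlo
    rw [extendAuto_low T γ E F d hx, extendAuto_low T γ E F d hlo]
    exact hmono x y hlo hxy
  · have hxlt : T.height x < γ + 1 := htop ▸ T.height_strictMono hxy
    have hx : T.height x ≤ γ := by
      rwa [Ordinal.add_one_eq_succ, Order.lt_succ_iff] at hxlt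
    have hle : γ ≤ T.height y := by rw [htop]; exact le_self_add
    have hu : T.height (T.restrict y γ) = γ := T.height_restrict y hle
    have hymem : y ∈ succSet T (T.restrict y γ) := mem_succSet_restrict T γ y htop
    have hxu : x ≤ T.restrict y γ := by
      rcases T.pred_linear hxy hymem.1 with h | h
      · exact h
      · rcases lt_or_eq_of_le h with h' | h'
        · exact absurd (T.height_strictMono h') (by rw [hu]; exact not_lt.mpr hx)
        · exact h'.ge
    have hFxu : F x ≤ F (T.restrict y γ) := by
      rcases lt_or_eq_of_le hxu with h | h
      · exact (hmono x (T.restrict y γ) hu.le h).le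
      · rw [h]
    have hm := extendAuto_mem T γ E F d hu hymem
    rw [extendAuto_low T γ E F d hx]
    exact lt_of_le_of_lt hFxu hm.1

end AutoAux

/-- Lemma 5.13: a countable family of automorphisms of `T↾(γ+1)` extends to a
family of automorphisms of `T↾(γ+2)` which take pairwise distinct values at
every node of level `γ+1`. -/
theorem auto_family_extension_pointwise_distinct
    (T : OmegaOneTree α) (γ : Ordinal) (hγ : γ < omega1)
    {ι : Type} [Countable ι] (f f' : ι → α → α)
    (hf : ∀ τ, IsTreeAuto T γ (f τ) (f' τ)) :
    ∃ g g' : ι → α → α,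
      (∀ τ, IsTreeAuto T (γ + 1) (g τ) (g' τ)) ∧
      (∀ τ, AutoExtends T γ (f τ) (f' τ) (g τ) (g' τ)) ∧
      (∀ τ₀ τ₁ : ι, τ₀ ≠ τ₁ → ∀ x : α, T.height x = γ + 1 → g τ₀ x ≠ g τ₁ x) := by
  classical
  obtain ⟨c0, hc0⟩ := exists_injective_nat ι
  set c : ι → ℤ := fun τ => (c0 τ : ℤ) with hc_def
  have hc : Function.Injective c := fun a b h => hc0 (Int.natCast_inj.mp h)
  have hEne : ∀ u : α, Nonempty (AutoAux.succSet T u ≃ ℤ) := by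
    intro u
    have h1 : (AutoAux.succSet T u).Countable :=
      (T.level_countable (T.height u + 1)).mono (fun y hy => hy.2)
    have h2 : (AutoAux.succSet T u).Infinite := T.splitting u
    have := h1.to_subtype
    have := h2.to_subtype
    exact nonempty_equiv_of_countable
  let E : ∀ u : α, AutoAux.succSet T u ≃ ℤ := fun u => (hEne u).some
  refine ⟨fun τ => AutoAux.extendAuto T γ E (f τ) (c τ),
    fun τ => AutoAux.extendAuto T γ E (f' τ) (-(c τ)), ?_, ?_, ?_⟩
  · intro τ
    obtain ⟨h1, h2, h3, h4, h5, h6⟩ := hf τ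
    refine ⟨fun x hx => AutoAux.height_extendAuto T γ E (f τ) (c τ) h1 hx,
      fun x hx => AutoAux.height_extendAuto T γ E (f' τ) (-(c τ)) h2 hx,
      fun x hx => AutoAux.extendAuto_inverse T γ E (f τ) (c τ) h1 (f' τ) h3 hx,
      fun x hx => ?_,
      fun x y hy hxy => AutoAux.extendAuto_strictMono T γ E (f τ) (c τ) h1 h5 hy hxy,
      fun x y hy hxy => AutoAux.extendAuto_strictMono T γ E (f' τ) (-(c τ)) h2 h6 hy hxy⟩
    have := AutoAux.extendAuto_inverse T γ E (f' τ) (-(c τ)) h2 (f τ) h4 hx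
    rwa [neg_neg] at this
  · intro τ
    exact ⟨fun x hx => AutoAux.extendAuto_low T γ E (f τ) (c τ) hx,
      fun x hx => AutoAux.extendAuto_low T γ E (f' τ) (-(c τ)) hx⟩
  · intro τ₀ τ₁ hne x hx heq
    replace heq : AutoAux.extendAuto T γ E (f τ₀) (c τ₀) x =
        AutoAux.extendAuto T γ E (f τ₁) (c τ₁) x := heq
    have hle : γ ≤ T.height x := by rw [hx]; exact le_self_add
    have hu : T.height (T.restrict x γ) = γ := T.height_restrict x hle
    have hxmem : x ∈ AutoAux.succSet T (T.restrict x γ) :=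
      AutoAux.mem_succSet_restrict T γ x hx
    have hF0 : T.height (f τ₀ (T.restrict x γ)) = γ := by rw [(hf τ₀).1 _ hu.le, hu]
    have hF1 : T.height (f τ₁ (T.restrict x γ)) = γ := by rw [(hf τ₁).1 _ hu.le, hu]
    have hm0 := AutoAux.extendAuto_mem T γ E (f τ₀) (c τ₀) hu hxmem
    have hm1 := AutoAux.extendAuto_mem T γ E (f τ₁) (c τ₁) hu hxmem
    have hv : f τ₀ (T.restrict x γ) = f τ₁ (T.restrict x γ) := by
      have e0 : T.restrict (AutoAux.extendAuto T γ E (f τ₀) (c τ₀) x) γ =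
          f τ₀ (T.restrict x γ) := T.restrict_eq hm0.1.le hF0
      have e1 : T.restrict (AutoAux.extendAuto T γ E (f τ₁) (c τ₁) x) γ =
          f τ₁ (T.restrict x γ) := T.restrict_eq hm1.1.le hF1
      rw [← e0, ← e1, heq]
    rw [AutoAux.extendAuto_top' T γ E (f τ₀) (c τ₀) hu hxmem,
      AutoAux.extendAuto_top' T γ E (f τ₁) (c τ₁) hu hxmem, hv] at heq
    have := (E (f τ₁ (T.restrict x γ))).symm.injective (Subtype.coe_injective heq)
    exact hne (hc (add_left_cancel this))
end
end
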